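/- arXiv:0906.3876 — 4 statements merged into one kernel-verified Lean document; each statement's English description precedes it below -/
import Mathlib

section
/- If $X$ and $Y$ are independent nonnegative random variables, $X$ has a subexponential tail, and $Y$ has a lighter tail than $X$ (i.e. $\mathbb{P}(Y > t)/\mathbb{P}(X > t) \to 0$), then $X + Y$ is subexponential and $\mathbb{P}(X + Y > t) \sim \mathbb{P}(X > t)$ as $t \to \infty$. -/
open MeasureTheory ProbabilityTheory Filter

/-- The tail of the `n`-fold convolution of `ν`:
`P(X₁ + ⋯ + Xₙ > t)` for `X₁, …, Xₙ` i.i.d. with law `ν`. -/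
noncomputable def convTail (ν : Measure ℝ) (n : ℕ) (t : ℝ) : ℝ :=
  ((Measure.pi fun _ : Fin n => ν) {x | t < ∑ i, x i}).toReal

/-- A law `ν` on `ℝ` is subexponential if `P(X₁+⋯+Xₙ > t) / P(X₁ > t) → n` for all `n ≥ 1`. -/
def Subexponential (ν : Measure ℝ) : Prop :=
  ∀ n : ℕ, 1 ≤ n →
    Tendsto (fun t => convTail ν n t / (ν (Set.Ioi t)).toReal) atTop (nhds (n : ℝ))

namespace SubexpProof
open Set
open scoped ENNReal

/-- The tail function of a measure on `ℝ`. -/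
noncomputable def tl (m : Measure ℝ) (t : ℝ) : ℝ≥0∞ := m (Ioi t)

lemma tl_def (m : Measure ℝ) (t : ℝ) : tl m t = m (Ioi t) := rfl

lemma tl_antitone (m : Measure ℝ) : Antitone (tl m) :=
  fun _ _ hab => measure_mono (Ioi_subset_Ioi hab)

lemma tl_le_one (m : Measure ℝ) [IsProbabilityMeasure m] (t : ℝ) : tl m t ≤ 1 :=
  prob_le_one

lemma tl_ne_top (m : Measure ℝ) [IsProbabilityMeasure m] (t : ℝ) : tl m t ≠ ⊤ :=
  (lt_of_le_of_lt (tl_le_one m t) ENNReal.one_lt_top).ne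

lemma measurable_tl_sub (m : Measure ℝ) (t : ℝ) : Measurable (fun x => tl m (t - x)) := by
  have : Monotone (fun x => tl m (t - x)) :=
    fun a b hab => tl_antitone m (by linarith)
  exact this.measurable

lemma measurableSet_addGt (t : ℝ) : MeasurableSet {p : ℝ × ℝ | t < p.1 + p.2} :=
  measurableSet_lt measurable_const (measurable_fst.add measurable_snd)

lemma tl_conv (σ τ : Measure ℝ) [SFinite σ] [SFinite τ] (t : ℝ) :
    tl (σ.conv τ) t = ∫⁻ x, tl τ (t - x) ∂σ := by
  rw [tl, Measure.conv,
    Measure.map_apply (by fun_prop : Measurable fun p : ℝ × ℝ => p.1 + p.2) measurableSet_Ioi]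
  have hpre : ((fun p : ℝ × ℝ => p.1 + p.2) ⁻¹' Ioi t) = {p : ℝ × ℝ | t < p.1 + p.2} := rfl
  rw [hpre, Measure.prod_apply (measurableSet_addGt t)]
  congr 1 with x
  congr 1
  ext y
  simp [sub_lt_iff_lt_add, add_comm]

lemma tl_neg (m : Measure ℝ) [IsProbabilityMeasure m] (hm : m (Iio 0) = 0) {t : ℝ}
    (ht : t < 0) : tl m t = 1 := by
  refine le_antisymm (tl_le_one m t) ?_
  have h1 : m (Ici 0) = 1 := by
    rw [← compl_Iio, measure_compl measurableSet_Iio (measure_ne_top m _), hm, measure_univ,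
      tsub_zero]
  calc (1 : ℝ≥0∞) = m (Ici 0) := h1.symm
    _ ≤ m (Ioi t) := measure_mono fun x hx => lt_of_lt_of_le ht hx

lemma conv_nonnegSupp (σ τ : Measure ℝ) [SFinite σ] [SFinite τ]
    (hσ : σ (Iio 0) = 0) (hτ : τ (Iio 0) = 0) : (σ.conv τ) (Iio 0) = 0 := by
  rw [Measure.conv, Measure.map_apply (by fun_prop : Measurable fun p : ℝ × ℝ => p.1 + p.2) measurableSet_Iio]
  refine le_antisymm ?_ (zero_le)
  have hsub : ((fun p : ℝ × ℝ => p.1 + p.2) ⁻¹' Iio 0) ⊆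
      (Iio 0 ×ˢ (univ : Set ℝ)) ∪ ((univ : Set ℝ) ×ˢ Iio 0) := by
    rintro ⟨x, y⟩ h
    simp only [mem_preimage, mem_Iio] at h
    by_contra hc
    simp only [mem_union, mem_prod, mem_univ, mem_Iio, and_true, true_and, not_or, not_lt] at hc
    linarith [hc.1, hc.2]
  calc (σ.prod τ) ((fun p : ℝ × ℝ => p.1 + p.2) ⁻¹' Iio 0)
      ≤ (σ.prod τ) ((Iio 0 ×ˢ (univ : Set ℝ)) ∪ ((univ : Set ℝ) ×ˢ Iio 0)) :=
        measure_mono hsub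
    _ ≤ (σ.prod τ) (Iio 0 ×ˢ (univ : Set ℝ)) + (σ.prod τ) ((univ : Set ℝ) ×ˢ Iio 0) :=
        measure_union_le _ _
    _ = 0 := by rw [Measure.prod_prod, Measure.prod_prod, hσ, hτ]; simp

lemma tl_conv_ge (σ τ : Measure ℝ) [SFinite σ] [IsProbabilityMeasure τ]
    (hτ : τ (Iio 0) = 0) (t : ℝ) : tl σ t ≤ tl (σ.conv τ) t := by
  rw [tl_conv]
  calc tl σ t = ∫⁻ _ in Ioi t, 1 ∂σ := by rw [setLIntegral_one]; rfl
    _ ≤ ∫⁻ x in Ioi t, tl τ (t - x) ∂σ := by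
        refine setLIntegral_mono (measurable_tl_sub τ t) fun x hx => ?_
        rw [tl_neg τ hτ (by simpa using hx : t - x < 0)]
    _ ≤ ∫⁻ x, tl τ (t - x) ∂σ := setLIntegral_le_lintegral _ _


/-- Master upper bound: if `τ`'s tail is `≤ e·ν`'s tail beyond `A`, then the tail of
`σ ∗ τ` is at most `tail σ (t-A) + e · tail (σ∗ν) (t-A)`. -/
lemma tl_conv_le_master (σ τ ν : Measure ℝ) [SFinite σ] [IsProbabilityMeasure τ]
    [IsProbabilityMeasure ν] (hν0 : ν (Iio 0) = 0) {A : ℝ} (hA : 0 ≤ A) {e : ℝ≥0∞}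
    (hτν : ∀ s, A ≤ s → tl τ s ≤ e * tl ν s) (t : ℝ) :
    tl (σ.conv τ) t ≤ tl σ (t - A) + e * tl (σ.conv ν) (t - A) := by
  rw [tl_conv, tl_conv, tl_def]
  have hmeas : Measurable fun x => tl ν (t - A - x) := by
    have : (fun x => tl ν (t - A - x)) = fun x => tl ν ((t - A) - x) := rfl
    rw [this]; exact measurable_tl_sub ν (t - A)
  calc ∫⁻ x, tl τ (t - x) ∂σ
      ≤ ∫⁻ x, ((Ioi (t - A)).indicator (fun _ => (1 : ℝ≥0∞)) x + e * tl ν ((t - A) - x)) ∂σ := by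
        refine lintegral_mono fun x => ?_
        rcases lt_or_ge (t - x) A with h | h
        · have hx : x ∈ Ioi (t - A) := by simp only [mem_Ioi]; linarith
          rw [indicator_of_mem hx]
          exact le_add_right (tl_le_one τ _)
        · have h1 : tl τ (t - x) ≤ e * tl ν (t - x) := hτν _ h
          have h2 : tl ν (t - x) ≤ tl ν (t - A - x) := tl_antitone ν (by linarith)
          refine le_add_left (h1.trans ?_)
          exact mul_le_mul_right h2 e
    _ = σ (Ioi (t - A)) + e * ∫⁻ x, tl ν ((t - A) - x) ∂σ := by
        rw [lintegral_add_left (measurable_const.indicator measurableSet_Ioi)]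
        congr 1
        · rw [lintegral_indicator_const measurableSet_Ioi, one_mul]
        · exact lintegral_const_mul _ hmeas

/-- Splitting a Lebesgue integral against a measure concentrated on `[0,∞)` into three pieces. -/
lemma lintegral_split (κ : Measure ℝ) (hκ0 : κ (Iio 0) = 0)
    {g : ℝ → ℝ≥0∞} (hg : Measurable g) {B t : ℝ} (hB : 0 ≤ B) (hBt : B ≤ t) :
    ∫⁻ y, g y ∂κ =
      (∫⁻ y in Icc 0 B, g y ∂κ) + (∫⁻ y in Ioc B t, g y ∂κ) + (∫⁻ y in Ioi t, g y ∂κ) := by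
  have h1 : ∫⁻ y, g y ∂κ = ∫⁻ y in Ici 0, g y ∂κ := by
    rw [← lintegral_add_compl g measurableSet_Iio (μ := κ), setLIntegral_measure_zero _ _ hκ0,
      zero_add, compl_Iio]
  have h2 : (Ici (0:ℝ)) = Icc 0 B ∪ Ioi B := (Icc_union_Ioi_eq_Ici hB).symm
  have h3 : (Ioi B) = Ioc B t ∪ Ioi t := (Ioc_union_Ioi_eq_Ioi hBt).symm
  rw [h1, h2, lintegral_union (measurableSet_Ioi) ?d1, h3,
    lintegral_union (measurableSet_Ioi) ?d2, add_assoc]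
  case d1 =>
    rw [Set.disjoint_left]; rintro x ⟨_, hx⟩ hx'
    exact absurd hx' (not_lt.2 hx)
  case d2 =>
    rw [Set.disjoint_left]; rintro x ⟨_, hx⟩ hx'
    exact absurd hx' (not_lt.2 hx)

/-- `n+1`-fold convolution power. -/
noncomputable def cp (m : Measure ℝ) : ℕ → Measure ℝ
  | 0 => m
  | n+1 => m.conv (cp m n)

instance cp_prob (m : Measure ℝ) [IsProbabilityMeasure m] :
    ∀ n, IsProbabilityMeasure (cp m n)
  | 0 => ‹_›
  | n+1 => by
      have := cp_prob m n
      unfold cp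
      infer_instance

lemma cp_nonnegSupp (m : Measure ℝ) [IsProbabilityMeasure m] (hm : m (Iio 0) = 0) :
    ∀ n, (cp m n) (Iio 0) = 0
  | 0 => hm
  | n+1 => by
      have := cp_prob m n
      exact conv_nonnegSupp m (cp m n) hm (cp_nonnegSupp m hm n)

/-- Tail-level associativity of convolution. -/
lemma tl_conv_assoc (α β γ : Measure ℝ) [SFinite α] [SFinite β] [SFinite γ] (t : ℝ) :
    tl ((α.conv β).conv γ) t = tl (α.conv (β.conv γ)) t := by
  have hm : Measurable fun p : ℝ × ℝ => tl γ (t - (p.1 + p.2)) := by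
    have h1 : Measurable fun s : ℝ => tl γ (t - s) := measurable_tl_sub γ t
    exact h1.comp (measurable_fst.add measurable_snd)
  rw [tl_conv, tl_conv, Measure.conv,
    lintegral_map (measurable_tl_sub γ t) (by fun_prop : Measurable fun p : ℝ × ℝ => p.1 + p.2)]
  rw [lintegral_prod _ hm.aemeasurable]
  refine lintegral_congr fun x => ?_
  rw [tl_conv]
  refine lintegral_congr fun y => ?_
  ring_nf


lemma measurableSet_sumGt (n : ℕ) (t : ℝ) :
    MeasurableSet {x : Fin n → ℝ | t < ∑ i, x i} :=
  measurableSet_lt measurable_const (Finset.measurable_sum _ fun i _ => measurable_pi_apply i)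

/-- Bridge: the tail of the `Measure.pi` sum equals the tail of the convolution power. -/
lemma cp_tail (m : Measure ℝ) [IsProbabilityMeasure m] :
    ∀ (n : ℕ) (t : ℝ),
      (Measure.pi fun _ : Fin (n+1) => m) {x | t < ∑ i, x i} = tl (cp m n) t
  | 0, t => by
    have mp := measurePreserving_funUnique m (Fin 1)
    have hset : {x : Fin 1 → ℝ | t < ∑ i, x i} =
        (MeasurableEquiv.funUnique (Fin 1) ℝ) ⁻¹' (Ioi t) := by
      ext x
      simp [Fin.sum_univ_one, MeasurableEquiv.funUnique]
    rw [hset]; erw [mp.measure_preimage measurableSet_Ioi.nullMeasurableSet, tl_def]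
    rfl
  | (n+1), t => by
    haveI := cp_prob m n
    have mp := measurePreserving_piFinSuccAbove (fun _ : Fin (n+2) => m) 0
    have hset : {x : Fin (n+2) → ℝ | t < ∑ i, x i} =
        (MeasurableEquiv.piFinSuccAbove (fun _ : Fin (n+2) => ℝ) 0) ⁻¹'
          {p : ℝ × (Fin (n+1) → ℝ) | t < p.1 + ∑ j, p.2 j} := by
      ext x
      simp only [mem_setOf_eq, mem_preimage, MeasurableEquiv.piFinSuccAbove,
        MeasurableEquiv.coe_mk, MeasurableEquiv.piFinSuccAbove_apply]
      rw [Fin.sum_univ_succ]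
      simp [Fin.tail]
    have hmeasset : MeasurableSet {p : ℝ × (Fin (n+1) → ℝ) | t < p.1 + ∑ j, p.2 j} :=
      measurableSet_lt measurable_const
        (measurable_fst.add (Finset.measurable_sum _ fun j _ =>
          (measurable_pi_apply j).comp measurable_snd))
    rw [hset, mp.measure_preimage hmeasset.nullMeasurableSet,
      Measure.prod_apply hmeasset]
    have hsec : ∀ a : ℝ, (Prod.mk a ⁻¹' {p : ℝ × (Fin (n+1) → ℝ) | t < p.1 + ∑ j, p.2 j}) =
        {y : Fin (n+1) → ℝ | (t - a) < ∑ j, y j} := by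
      intro a; ext y; simp [sub_lt_iff_lt_add, add_comm]
    calc ∫⁻ a, (Measure.pi fun _ : Fin (n+1) => m)
          (Prod.mk a ⁻¹' {p : ℝ × (Fin (n+1) → ℝ) | t < p.1 + ∑ j, p.2 j}) ∂m
        = ∫⁻ a, tl (cp m n) (t - a) ∂m :=
          lintegral_congr fun a => by rw [hsec a]; exact cp_tail m n (t - a)
      _ = tl (m.conv (cp m n)) t := (tl_conv m (cp m n) t).symm
      _ = tl (cp m (n+1)) t := rfl
  termination_by n => n

lemma cp_zero (m : Measure ℝ) : cp m 0 = m := rfl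
lemma cp_succ (m : Measure ℝ) (n : ℕ) : cp m (n+1) = m.conv (cp m n) := rfl

section RealLayer

variable {ν : Measure ℝ} [IsProbabilityMeasure ν]

lemma fpos (hpos : ∀ t, tl ν t ≠ 0) (t : ℝ) : 0 < (tl ν t).toReal :=
  ENNReal.toReal_pos (hpos t) (tl_ne_top ν t)

lemma f_anti (m : Measure ℝ) [IsProbabilityMeasure m] :
    Antitone (fun t => (tl m t).toReal) :=
  fun a b hab => ENNReal.toReal_mono (tl_ne_top m a) (tl_antitone m hab)

/-- `(ν (Ioc u v)).toReal = f u - f v` for `u ≤ v`. -/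
lemma tl_Ioc (m : Measure ℝ) [IsProbabilityMeasure m] {u v : ℝ} (huv : u ≤ v) :
    (m (Ioc u v)).toReal = (tl m u).toReal - (tl m v).toReal := by
  have hd : Ioc u v = Ioi u \ Ioi v := by
    ext x; simp only [mem_Ioc, mem_diff, mem_Ioi, not_lt]
  rw [hd, measure_diff (Ioi_subset_Ioi huv) measurableSet_Ioi.nullMeasurableSet
    (measure_ne_top m _), ENNReal.toReal_sub_of_le (measure_mono (Ioi_subset_Ioi huv))
    (measure_ne_top m _), tl_def, tl_def]

/-- A squeeze criterion for convergence. -/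
lemma tendsto_of_eps_bounds {g : ℝ → ℝ} {L : ℝ}
    (h : ∀ ε : ℝ, 0 < ε →
      (∃ u : ℝ → ℝ, ∃ Lu : ℝ, Tendsto u atTop (nhds Lu) ∧ Lu ≤ L + ε ∧
        ∀ᶠ t in atTop, g t ≤ u t) ∧
      (∃ l : ℝ → ℝ, ∃ Ll : ℝ, Tendsto l atTop (nhds Ll) ∧ L - ε ≤ Ll ∧
        ∀ᶠ t in atTop, l t ≤ g t)) :
    Tendsto g atTop (nhds L) := by
  rw [Metric.tendsto_nhds]
  intro ε hε
  obtain ⟨⟨u, Lu, hu, hLu, hgu⟩, ⟨l, Ll, hl, hLl, hlg⟩⟩ := h (ε/2) (by positivity)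
  have h1 : ∀ᶠ t in atTop, u t < Lu + ε/2 :=
    hu.eventually (eventually_lt_nhds (by linarith : Lu < Lu + ε/2)) |>.mono fun t ht => ht
  have h2 : ∀ᶠ t in atTop, Ll - ε/2 < l t :=
    hl.eventually (eventually_gt_nhds (by linarith : Ll - ε/2 < Ll)) |>.mono fun t ht => ht
  filter_upwards [h1, h2, hgu, hlg] with t ht1 ht2 ht3 ht4
  rw [Real.dist_eq, abs_sub_lt_iff]
  constructor <;> linarith

/-- Long-tailedness of a subexponential distribution. -/
lemma longtail (hν0 : ν (Iio 0) = 0) (hpos : ∀ t, tl ν t ≠ 0)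
    (hF2 : Tendsto (fun t => (tl (ν.conv ν) t).toReal / (tl ν t).toReal) atTop (nhds 2))
    (hF0 : Tendsto (fun t => (tl ν t).toReal) atTop (nhds 0))
    {A : ℝ} (hA : 0 ≤ A) :
    Tendsto (fun t => (tl ν (t - A)).toReal / (tl ν t).toReal) atTop (nhds 1) := by
  have hfpos := fpos hpos
  -- key ENNReal inequality
  have key : ∀ t, A ≤ t →
      tl ν t * ν (Icc 0 A) + tl ν (t-A) * ν (Ioc A t) + ν (Ioi t) ≤ tl (ν.conv ν) t := by
    intro t hAt
    rw [tl_conv, lintegral_split ν hν0 (measurable_tl_sub ν t) hA hAt]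
    refine add_le_add (add_le_add ?_ ?_) ?_
    · calc tl ν t * ν (Icc 0 A) = ∫⁻ _ in Icc 0 A, tl ν t ∂ν := (setLIntegral_const _ _).symm
        _ ≤ ∫⁻ y in Icc 0 A, tl ν (t - y) ∂ν :=
          setLIntegral_mono (measurable_tl_sub ν t) fun y hy =>
            tl_antitone ν (by have := hy.1; linarith)
    · calc tl ν (t-A) * ν (Ioc A t) = ∫⁻ _ in Ioc A t, tl ν (t-A) ∂ν :=
          (setLIntegral_const _ _).symm
        _ ≤ ∫⁻ y in Ioc A t, tl ν (t - y) ∂ν :=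
          setLIntegral_mono (measurable_tl_sub ν t) fun y hy =>
            tl_antitone ν (by have := hy.1; linarith)
    · calc ν (Ioi t) = ∫⁻ _ in Ioi t, 1 ∂ν := by rw [setLIntegral_one]
        _ ≤ ∫⁻ y in Ioi t, tl ν (t - y) ∂ν :=
          setLIntegral_mono (measurable_tl_sub ν t) fun y hy =>
            (tl_neg ν hν0 (by have : t < y := hy; linarith : t - y < 0)).ge
  -- real versions
  have hIcc : (ν (Icc 0 A)).toReal = 1 - (tl ν A).toReal := by
    have hcompl : Icc (0:ℝ) A = (Iio 0 ∪ Ioi A)ᶜ := by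
      rw [compl_union, compl_Iio, compl_Ioi, Ici_inter_Iic]
    have hun : ν (Iio 0 ∪ Ioi A) = tl ν A := by
      refine le_antisymm ?_ ?_
      · calc ν (Iio 0 ∪ Ioi A) ≤ ν (Iio 0) + ν (Ioi A) := measure_union_le _ _
          _ = tl ν A := by rw [hν0, zero_add, tl_def]
      · rw [tl_def]; exact measure_mono subset_union_right
    rw [hcompl, measure_compl (measurableSet_Iio.union measurableSet_Ioi) (measure_ne_top ν _),
      hun, measure_univ, ENNReal.toReal_sub_of_le (tl_le_one ν A) ENNReal.one_ne_top, ENNReal.toReal_one]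
  have realkey : ∀ t, A ≤ t →
      (tl ν t).toReal * (1 - (tl ν A).toReal) +
        (tl ν (t-A)).toReal * ((tl ν A).toReal - (tl ν t).toReal) + (tl ν t).toReal ≤
      (tl (ν.conv ν) t).toReal := by
    intro t hAt
    have h := key t hAt
    have hIoc := tl_Ioc ν hAt  -- (ν (Ioc A t)).toReal = ...
    have fin1 : tl ν t * ν (Icc 0 A) ≠ ⊤ :=
      ENNReal.mul_ne_top (tl_ne_top ν t) (measure_ne_top ν _)
    have fin2 : tl ν (t-A) * ν (Ioc A t) ≠ ⊤ :=
      ENNReal.mul_ne_top (tl_ne_top ν _) (measure_ne_top ν _)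
    have := ENNReal.toReal_mono (tl_ne_top (ν.conv ν) t) h
    rw [ENNReal.toReal_add (ENNReal.add_ne_top.2 ⟨fin1, fin2⟩) (measure_ne_top ν _),
      ENNReal.toReal_add fin1 fin2, ENNReal.toReal_mul, ENNReal.toReal_mul, hIcc, hIoc] at this
    rw [← tl_def ν t] at this
    convert this using 2
  -- squeeze
  have ha : 0 < (tl ν A).toReal := hfpos A
  have hflt : ∀ᶠ t in atTop, (tl ν t).toReal < (tl ν A).toReal :=
    hF0.eventually (eventually_lt_nhds ha)
  have hupper : ∀ᶠ t in atTop, (tl ν (t-A)).toReal / (tl ν t).toReal ≤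
      ((tl (ν.conv ν) t).toReal / (tl ν t).toReal - (2 - (tl ν A).toReal)) /
        ((tl ν A).toReal - (tl ν t).toReal) := by
    filter_upwards [eventually_ge_atTop A, hflt] with t hAt hlt
    have hk := realkey t hAt
    have hden : 0 < (tl ν A).toReal - (tl ν t).toReal := by linarith
    rw [div_le_div_iff₀ (hfpos t) hden]
    have hexp : ((tl (ν.conv ν) t).toReal / (tl ν t).toReal - (2 - (tl ν A).toReal)) *
        (tl ν t).toReal = (tl (ν.conv ν) t).toReal - (2 - (tl ν A).toReal) * (tl ν t).toReal := by
      rw [sub_mul, div_mul_cancel₀ _ (hfpos t).ne']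
    rw [hexp]
    nlinarith [hk]
  have hlower : ∀ᶠ t in atTop, (1:ℝ) ≤ (tl ν (t-A)).toReal / (tl ν t).toReal := by
    refine Eventually.of_forall fun t => ?_
    rw [le_div_iff₀ (hfpos t), one_mul]
    exact f_anti ν (by linarith)
  have hulim : Tendsto (fun t => ((tl (ν.conv ν) t).toReal / (tl ν t).toReal -
      (2 - (tl ν A).toReal)) / ((tl ν A).toReal - (tl ν t).toReal)) atTop
      (nhds (((2:ℝ) - (2 - (tl ν A).toReal)) / ((tl ν A).toReal - 0))) := by
    exact (hF2.sub tendsto_const_nhds).div (tendsto_const_nhds.sub hF0) (by simpa using ha.ne')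
  have hval : ((2:ℝ) - (2 - (tl ν A).toReal)) / ((tl ν A).toReal - 0) = 1 := by
    rw [sub_zero, sub_sub_cancel, div_self ha.ne']
  rw [hval] at hulim
  exact tendsto_of_tendsto_of_tendsto_of_le_of_le' tendsto_const_nhds hulim hlower hupper


/-- Shifting the argument doesn't change the ratio limit, by long-tailedness. -/
lemma ratio_shift (hpos : ∀ t, tl ν t ≠ 0) {g : ℝ → ℝ} {c A : ℝ}
    (hlt : Tendsto (fun t => (tl ν (t - A)).toReal / (tl ν t).toReal) atTop (nhds 1))
    (hg : Tendsto (fun t => g t / (tl ν t).toReal) atTop (nhds c)) :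
    Tendsto (fun t => g (t - A) / (tl ν t).toReal) atTop (nhds c) := by
  have hshift : Tendsto (fun t : ℝ => t - A) atTop atTop :=
    tendsto_atTop_add_const_right atTop (-A) tendsto_id
  have h1 := (hg.comp hshift).mul hlt
  rw [mul_one] at h1
  refine h1.congr fun t => ?_
  have h2 := fpos hpos (t - A)
  have h3 := fpos hpos t
  show g (t - A) / (tl ν (t - A)).toReal * ((tl ν (t - A)).toReal / (tl ν t).toReal) = _
  field_simp

/-- Key lemma: convolving with `ν` adds `1` to the tail ratio. -/
lemma lemmaE (σ : Measure ℝ) [IsProbabilityMeasure σ]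
    (hν0 : ν (Iio 0) = 0) (hσ0 : σ (Iio 0) = 0)
    (hpos : ∀ t, tl ν t ≠ 0)
    (hF2 : Tendsto (fun t => (tl (ν.conv ν) t).toReal / (tl ν t).toReal) atTop (nhds 2))
    (hF0 : Tendsto (fun t => (tl ν t).toReal) atTop (nhds 0))
    {c : ℝ} (hσc : Tendsto (fun t => (tl σ t).toReal / (tl ν t).toReal) atTop (nhds c)) :
    Tendsto (fun t => (tl (σ.conv ν) t).toReal / (tl ν t).toReal) atTop (nhds (c+1)) := by
  have hfpos := fpos hpos
  have hc0 : 0 ≤ c := ge_of_tendsto hσc (Eventually.of_forall fun t =>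
    div_nonneg ENNReal.toReal_nonneg ENNReal.toReal_nonneg)
  refine tendsto_of_eps_bounds fun ε hε => ?_
  obtain ⟨A₀, hA₀⟩ := Metric.tendsto_atTop.1 hσc ε hε
  set A := max A₀ 0 with hAdef
  have hA : (0:ℝ) ≤ A := le_max_right _ _
  have hce : 0 ≤ c + ε := by linarith
  have hub : ∀ s, A ≤ s → tl σ s ≤ ENNReal.ofReal (c+ε) * tl ν s := by
    intro s hs
    have hd := hA₀ s (le_trans (le_max_left _ _) hs)
    rw [Real.dist_eq, abs_sub_lt_iff] at hd
    have h1 : (tl σ s).toReal < (c+ε) * (tl ν s).toReal := by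
      have h2 : (tl σ s).toReal / (tl ν s).toReal < c + ε := by linarith [hd.1]
      exact (div_lt_iff₀ (hfpos s)).1 h2
    calc tl σ s = ENNReal.ofReal (tl σ s).toReal := (ENNReal.ofReal_toReal (tl_ne_top σ s)).symm
      _ ≤ ENNReal.ofReal ((c+ε) * (tl ν s).toReal) := ENNReal.ofReal_le_ofReal h1.le
      _ = ENNReal.ofReal (c+ε) * tl ν s := by
          rw [ENNReal.ofReal_mul hce, ENNReal.ofReal_toReal (tl_ne_top ν s)]
  have hlb : ∀ s, A ≤ s → ENNReal.ofReal (c-ε) * tl ν s ≤ tl σ s := by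
    intro s hs
    rcases le_or_gt (c - ε) 0 with h | h
    · rw [ENNReal.ofReal_eq_zero.2 h, zero_mul]; exact zero_le
    · have hd := hA₀ s (le_trans (le_max_left _ _) hs)
      rw [Real.dist_eq, abs_sub_lt_iff] at hd
      have h1 : (c-ε) * (tl ν s).toReal ≤ (tl σ s).toReal := by
        have h2 : c - ε < (tl σ s).toReal / (tl ν s).toReal := by linarith [hd.2]
        exact ((lt_div_iff₀ (hfpos s)).1 h2).le
      calc ENNReal.ofReal (c-ε) * tl ν s = ENNReal.ofReal ((c-ε) * (tl ν s).toReal) := by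
            rw [ENNReal.ofReal_mul h.le, ENNReal.ofReal_toReal (tl_ne_top ν s)]
        _ ≤ ENNReal.ofReal (tl σ s).toReal := ENNReal.ofReal_le_ofReal h1
        _ = tl σ s := ENNReal.ofReal_toReal (tl_ne_top σ s)
  set f : ℝ → ℝ := fun t => (tl ν t).toReal with hfdef
  set f2 : ℝ → ℝ := fun t => (tl (ν.conv ν) t).toReal with hf2def
  set S : ℝ → ℝ := fun t => (tl (σ.conv ν) t).toReal with hSdef
  have main : ∀ t, A ≤ t →
      S t ≤ (c+ε) * (f2 t - f t) + (f (t-A) - f t) + f t ∧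
      (0 ≤ c - ε → (c-ε) * (f2 t - f (t-A)) + f t ≤ S t) := by
    intro t hAt
    have hB : (0:ℝ) ≤ t - A := by linarith
    have hBt : t - A ≤ t := by linarith
    have hJsplit : tl (σ.conv ν) t =
        (∫⁻ y in Icc 0 (t-A), tl σ (t - y) ∂ν) + (∫⁻ y in Ioc (t-A) t, tl σ (t - y) ∂ν) +
          (∫⁻ y in Ioi t, tl σ (t - y) ∂ν) := by
      rw [Measure.conv_comm, tl_conv, lintegral_split ν hν0 (measurable_tl_sub σ t) hB hBt]
    have hIsplit : tl (ν.conv ν) t =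
        (∫⁻ y in Icc 0 (t-A), tl ν (t - y) ∂ν) + (∫⁻ y in Ioc (t-A) t, tl ν (t - y) ∂ν) +
          (∫⁻ y in Ioi t, tl ν (t - y) ∂ν) := by
      rw [tl_conv, lintegral_split ν hν0 (measurable_tl_sub ν t) hB hBt]
    set J1 := ∫⁻ y in Icc 0 (t-A), tl σ (t - y) ∂ν
    set J2 := ∫⁻ y in Ioc (t-A) t, tl σ (t - y) ∂ν
    set J3 := ∫⁻ y in Ioi t, tl σ (t - y) ∂ν
    set I1 := ∫⁻ y in Icc 0 (t-A), tl ν (t - y) ∂ν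
    set I2 := ∫⁻ y in Ioc (t-A) t, tl ν (t - y) ∂ν
    set I3 := ∫⁻ y in Ioi t, tl ν (t - y) ∂ν
    have hJ1f : J1 ≠ ⊤ := by
      refine ne_top_of_le_ne_top (tl_ne_top (σ.conv ν) t) ?_
      rw [hJsplit]; exact le_add_right (le_add_right le_rfl)
    have hJ2f : J2 ≠ ⊤ := by
      refine ne_top_of_le_ne_top (tl_ne_top (σ.conv ν) t) ?_
      rw [hJsplit]; exact le_add_right (le_add_left le_rfl)
    have hJ3f : J3 ≠ ⊤ := by
      refine ne_top_of_le_ne_top (tl_ne_top (σ.conv ν) t) ?_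
      rw [hJsplit]; exact le_add_left le_rfl
    have hI1f : I1 ≠ ⊤ := by
      refine ne_top_of_le_ne_top (tl_ne_top (ν.conv ν) t) ?_
      rw [hIsplit]; exact le_add_right (le_add_right le_rfl)
    have hI2f : I2 ≠ ⊤ := by
      refine ne_top_of_le_ne_top (tl_ne_top (ν.conv ν) t) ?_
      rw [hIsplit]; exact le_add_right (le_add_left le_rfl)
    have hI3f : I3 ≠ ⊤ := by
      refine ne_top_of_le_ne_top (tl_ne_top (ν.conv ν) t) ?_
      rw [hIsplit]; exact le_add_left le_rfl
    have hJ3 : J3 = tl ν t := by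
      have h : J3 = ∫⁻ _ in Ioi t, 1 ∂ν := by
        refine setLIntegral_congr_fun measurableSet_Ioi (fun y hy => ?_)
        exact tl_neg σ hσ0 (by simp only [mem_Ioi] at hy; linarith)
      rw [h, setLIntegral_one, tl_def]
    have hI3 : I3 = tl ν t := by
      have h : I3 = ∫⁻ _ in Ioi t, 1 ∂ν := by
        refine setLIntegral_congr_fun measurableSet_Ioi (fun y hy => ?_)
        exact tl_neg ν hν0 (by simp only [mem_Ioi] at hy; linarith)
      rw [h, setLIntegral_one, tl_def]
    have hJ1ub : J1 ≤ ENNReal.ofReal (c+ε) * I1 := by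
      rw [← lintegral_const_mul _ (measurable_tl_sub ν t)]
      refine setLIntegral_mono (measurable_const.mul (measurable_tl_sub ν t)) fun y hy => ?_
      exact hub (t - y) (by have := hy.2; linarith)
    have hJ1lb : ENNReal.ofReal (c-ε) * I1 ≤ J1 := by
      rw [← lintegral_const_mul _ (measurable_tl_sub ν t)]
      refine setLIntegral_mono (measurable_tl_sub σ t) fun y hy => ?_
      exact hlb (t - y) (by have := hy.2; linarith)
    have hJ2ub : J2 ≤ ν (Ioc (t-A) t) := by
      have h : J2 ≤ ∫⁻ _ in Ioc (t-A) t, 1 ∂ν :=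
        setLIntegral_mono measurable_const fun y _ => tl_le_one σ _
      rwa [setLIntegral_one] at h
    have hI2ub : I2 ≤ ν (Ioc (t-A) t) := by
      have h : I2 ≤ ∫⁻ _ in Ioc (t-A) t, 1 ∂ν :=
        setLIntegral_mono measurable_const fun y _ => tl_le_one ν _
      rwa [setLIntegral_one] at h
    have hd : (ν (Ioc (t-A) t)).toReal = f (t-A) - f t := tl_Ioc ν hBt
    have hSsplit : S t = J1.toReal + J2.toReal + J3.toReal := by
      rw [hSdef]
      simp only
      rw [hJsplit, ENNReal.toReal_add (ENNReal.add_ne_top.2 ⟨hJ1f, hJ2f⟩) hJ3f,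
        ENNReal.toReal_add hJ1f hJ2f]
    have hf2split : f2 t = I1.toReal + I2.toReal + I3.toReal := by
      rw [hf2def]
      simp only
      rw [hIsplit, ENNReal.toReal_add (ENNReal.add_ne_top.2 ⟨hI1f, hI2f⟩) hI3f,
        ENNReal.toReal_add hI1f hI2f]
    have hJ3r : J3.toReal = f t := by rw [hJ3]
    have hI3r : I3.toReal = f t := by rw [hI3]
    have hJ1ubr : J1.toReal ≤ (c+ε) * I1.toReal := by
      have h := ENNReal.toReal_mono (ENNReal.mul_ne_top ENNReal.ofReal_ne_top hI1f) hJ1ub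
      rwa [ENNReal.toReal_mul, ENNReal.toReal_ofReal hce] at h
    have hJ2ubr : J2.toReal ≤ f (t-A) - f t := by
      have h := ENNReal.toReal_mono (measure_ne_top ν _) hJ2ub
      rwa [hd] at h
    have hI2ubr : I2.toReal ≤ f (t-A) - f t := by
      have h := ENNReal.toReal_mono (measure_ne_top ν _) hI2ub
      rwa [hd] at h
    have hI1nn : 0 ≤ I1.toReal := ENNReal.toReal_nonneg
    have hI2nn : 0 ≤ I2.toReal := ENNReal.toReal_nonneg
    have hJ2nn : 0 ≤ J2.toReal := ENNReal.toReal_nonneg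
    constructor
    · have hI1ub : I1.toReal ≤ f2 t - f t := by
        have : f2 t = I1.toReal + I2.toReal + I3.toReal := hf2split
        rw [hI3r] at this; linarith
      have h : J1.toReal ≤ (c+ε) * (f2 t - f t) := le_trans hJ1ubr (by nlinarith)
      rw [hSsplit, hJ3r]; linarith
    · intro hcem
      have hJ1lbr : (c-ε) * I1.toReal ≤ J1.toReal := by
        have h := ENNReal.toReal_mono hJ1f hJ1lb
        rwa [ENNReal.toReal_mul, ENNReal.toReal_ofReal hcem] at h
      have hI1lb : f2 t - f (t-A) ≤ I1.toReal := by
        have : f2 t = I1.toReal + I2.toReal + I3.toReal := hf2split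
        rw [hI3r] at this; linarith
      have h : (c-ε) * (f2 t - f (t-A)) ≤ J1.toReal := le_trans (by nlinarith) hJ1lbr
      rw [hSsplit, hJ3r]; linarith
  -- assembly
  have hRA := longtail hν0 hpos hF2 hF0 hA
  have hSge : ∀ t, f t ≤ S t := by
    intro t
    have h : tl ν t ≤ tl (σ.conv ν) t := by
      rw [Measure.conv_comm]; exact tl_conv_ge ν σ hσ0 t
    exact ENNReal.toReal_mono (tl_ne_top _ _) h
  have hr2R : Tendsto (fun t => f2 t / f t - f (t-A) / f t) atTop (nhds 1) := by
    have h := hF2.sub hRA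
    have h21 : (2:ℝ) - 1 = 1 := by norm_num
    rwa [h21] at h
  have hev : ∀ᶠ t in atTop, 0 ≤ f2 t - f (t-A) := by
    filter_upwards [hr2R.eventually (eventually_gt_nhds (by norm_num : (0:ℝ) < 1))] with t ht
    have h3 := hfpos t
    have heq : f2 t - f (t-A) = (f2 t / f t - f (t-A) / f t) * f t := by
        rw [sub_mul, div_mul_cancel₀ _ (h3.ne' : f t ≠ 0), div_mul_cancel₀ _ (h3.ne' : f t ≠ 0)]
    rw [heq]
    exact mul_nonneg ht.le h3.le
  constructor
  · refine ⟨fun t => (c+ε) * (f2 t / f t - 1) + (f (t-A) / f t - 1) + 1,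
      (c+ε) * (2 - 1) + (1 - 1) + 1, ?_, le_of_eq (by ring), ?_⟩
    · exact (((hF2.sub tendsto_const_nhds).const_mul (c+ε)).add
        (hRA.sub tendsto_const_nhds)).add tendsto_const_nhds
    · filter_upwards [eventually_ge_atTop A] with t hAt
      have h := (main t hAt).1
      have h3 := hfpos t
      calc S t / f t ≤ ((c+ε) * (f2 t - f t) + (f (t-A) - f t) + f t) / f t :=
            (div_le_div_iff_of_pos_right h3).2 h
        _ = (c+ε) * (f2 t / f t - 1) + (f (t-A) / f t - 1) + 1 := by
            rw [add_div, add_div, mul_div_assoc, sub_div, sub_div, div_self (h3.ne' : f t ≠ 0)]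
  · refine ⟨fun t => (c-ε) * (f2 t / f t - f (t-A) / f t) + 1,
      (c-ε) * (2 - 1) + 1, ?_, le_of_eq (by ring), ?_⟩
    · exact ((hF2.sub hRA).const_mul (c-ε)).add tendsto_const_nhds
    · filter_upwards [eventually_ge_atTop A, hev] with t hAt hevt
      have h3 := hfpos t
      rcases le_or_gt 0 (c - ε) with hcem | hcem
      · have h := (main t hAt).2 hcem
        calc (c-ε) * (f2 t / f t - f (t-A) / f t) + 1
            = ((c-ε) * (f2 t - f (t-A)) + f t) / f t := by
                rw [add_div, mul_div_assoc, sub_div, div_self (h3.ne' : f t ≠ 0)]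
          _ ≤ S t / f t := (div_le_div_iff_of_pos_right h3).2 h
      · have h1 : (c-ε) * (f2 t / f t - f (t-A) / f t) ≤ 0 := by
          apply mul_nonpos_of_nonpos_of_nonneg hcem.le
          have heq : f2 t / f t - f (t-A) / f t = (f2 t - f (t-A)) / f t := by ring
          rw [heq]
          exact div_nonneg hevt h3.le
        have h2 : (1:ℝ) ≤ S t / f t := by
          rw [le_div_iff₀ h3, one_mul]
          exact hSge t
        linarith


/-- Key lemma: adding an independent summand with lighter tail doesn't change the ratio. -/
lemma lemmaD (σ τ : Measure ℝ) [IsProbabilityMeasure σ] [IsProbabilityMeasure τ]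
    (hν0 : ν (Iio 0) = 0) (hτ0 : τ (Iio 0) = 0)
    (hpos : ∀ t, tl ν t ≠ 0)
    (hF2 : Tendsto (fun t => (tl (ν.conv ν) t).toReal / (tl ν t).toReal) atTop (nhds 2))
    (hF0 : Tendsto (fun t => (tl ν t).toReal) atTop (nhds 0))
    {c : ℝ} (hσc : Tendsto (fun t => (tl σ t).toReal / (tl ν t).toReal) atTop (nhds c))
    (hσν : Tendsto (fun t => (tl (σ.conv ν) t).toReal / (tl ν t).toReal) atTop (nhds (c+1)))
    (hτc : Tendsto (fun t => (tl τ t).toReal / (tl ν t).toReal) atTop (nhds 0)) :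
    Tendsto (fun t => (tl (σ.conv τ) t).toReal / (tl ν t).toReal) atTop (nhds c) := by
  have hfpos := fpos hpos
  have hc0 : 0 ≤ c := ge_of_tendsto hσc (Eventually.of_forall fun t =>
    div_nonneg ENNReal.toReal_nonneg ENNReal.toReal_nonneg)
  refine tendsto_of_eps_bounds fun ε hε => ?_
  constructor
  · -- upper bound
    set δ : ℝ := ε / (c + 2) with hδdef
    have hδ : 0 < δ := div_pos hε (by linarith)
    obtain ⟨A₀, hA₀⟩ := Metric.tendsto_atTop.1 hτc δ hδ
    set A := max A₀ 0 with hAdef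
    have hA : (0:ℝ) ≤ A := le_max_right _ _
    have hτb : ∀ s, A ≤ s → tl τ s ≤ ENNReal.ofReal δ * tl ν s := by
      intro s hs
      have hd := hA₀ s (le_trans (le_max_left _ _) hs)
      rw [Real.dist_eq, abs_sub_lt_iff] at hd
      have h1 : (tl τ s).toReal < δ * (tl ν s).toReal := by
        have h2 : (tl τ s).toReal / (tl ν s).toReal < δ := by linarith [hd.1]
        exact (div_lt_iff₀ (hfpos s)).1 h2
      calc tl τ s = ENNReal.ofReal (tl τ s).toReal := (ENNReal.ofReal_toReal (tl_ne_top τ s)).symm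
        _ ≤ ENNReal.ofReal (δ * (tl ν s).toReal) := ENNReal.ofReal_le_ofReal h1.le
        _ = ENNReal.ofReal δ * tl ν s := by
            rw [ENNReal.ofReal_mul hδ.le, ENNReal.ofReal_toReal (tl_ne_top ν s)]
    have hmaster : ∀ t, (tl (σ.conv τ) t).toReal ≤
        (tl σ (t-A)).toReal + δ * (tl (σ.conv ν) (t-A)).toReal := by
      intro t
      have h := tl_conv_le_master σ τ ν hν0 hA hτb t
      have hfin : tl σ (t-A) + ENNReal.ofReal δ * tl (σ.conv ν) (t-A) ≠ ⊤ :=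
        ENNReal.add_ne_top.2 ⟨tl_ne_top σ _,
          ENNReal.mul_ne_top ENNReal.ofReal_ne_top (tl_ne_top (σ.conv ν) _)⟩
      have h2 := ENNReal.toReal_mono hfin h
      rwa [ENNReal.toReal_add (tl_ne_top σ _)
        (ENNReal.mul_ne_top ENNReal.ofReal_ne_top (tl_ne_top (σ.conv ν) _)),
        ENNReal.toReal_mul, ENNReal.toReal_ofReal hδ.le] at h2
    have hRA := longtail hν0 hpos hF2 hF0 hA
    refine ⟨fun t => (tl σ (t-A)).toReal / (tl ν t).toReal +
        δ * ((tl (σ.conv ν) (t-A)).toReal / (tl ν t).toReal), c + δ * (c+1), ?_, ?_, ?_⟩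
    · exact (ratio_shift hpos hRA hσc).add ((ratio_shift hpos hRA hσν).const_mul δ)
    · have h1 : δ * (c+1) ≤ ε := by
        rw [hδdef]
        rw [div_mul_eq_mul_div, div_le_iff₀ (by linarith : (0:ℝ) < c + 2)]
        nlinarith
      linarith
    · refine Eventually.of_forall fun t => ?_
      have h3 := hfpos t
      calc (tl (σ.conv τ) t).toReal / (tl ν t).toReal
          ≤ ((tl σ (t-A)).toReal + δ * (tl (σ.conv ν) (t-A)).toReal) / (tl ν t).toReal :=
            (div_le_div_iff_of_pos_right h3).2 (hmaster t)
        _ = (tl σ (t-A)).toReal / (tl ν t).toReal +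
            δ * ((tl (σ.conv ν) (t-A)).toReal / (tl ν t).toReal) := by ring
  · -- lower bound
    refine ⟨fun t => (tl σ t).toReal / (tl ν t).toReal, c, hσc, by linarith, ?_⟩
    refine Eventually.of_forall fun t => ?_
    have h : tl σ t ≤ tl (σ.conv τ) t := tl_conv_ge σ τ hτ0 t
    exact (div_le_div_iff_of_pos_right (hfpos t)).2 (ENNReal.toReal_mono (tl_ne_top _ _) h)


end RealLayer

end SubexpProof

open SubexpProof Set in
theorem subexponential_add_lighter_tail
    {Ω : Type*} [MeasurableSpace Ω] (μ : Measure Ω) [IsProbabilityMeasure μ]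
    (X Y : Ω → ℝ) (hX : Measurable X) (hY : Measurable Y)
    (hX0 : ∀ ω, 0 ≤ X ω) (hY0 : ∀ ω, 0 ≤ Y ω)
    (hindep : IndepFun X Y μ)
    (hsub : Subexponential (μ.map X))
    (hlight : Tendsto (fun t => (μ {ω | t < Y ω}).toReal / (μ {ω | t < X ω}).toReal)
      atTop (nhds 0)) :
    Subexponential (μ.map fun ω => X ω + Y ω) ∧
    Tendsto (fun t => (μ {ω | t < X ω + Y ω}).toReal / (μ {ω | t < X ω}).toReal)
      atTop (nhds 1) := by
  classical
  set ν := μ.map X with hνdef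
  set ρ := μ.map Y with hρdef
  haveI : IsProbabilityMeasure ν := Measure.isProbabilityMeasure_map hX.aemeasurable
  haveI : IsProbabilityMeasure ρ := Measure.isProbabilityMeasure_map hY.aemeasurable
  have hν0 : ν (Iio 0) = 0 := by
    rw [hνdef, Measure.map_apply hX measurableSet_Iio]
    have h : X ⁻¹' (Iio 0) = ∅ := by
      ext ω
      simp only [mem_preimage, mem_Iio, mem_empty_iff_false, iff_false, not_lt]
      exact hX0 ω
    rw [h, measure_empty]
  have hρ0 : ρ (Iio 0) = 0 := by
    rw [hρdef, Measure.map_apply hY measurableSet_Iio]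
    have h : Y ⁻¹' (Iio 0) = ∅ := by
      ext ω
      simp only [mem_preimage, mem_Iio, mem_empty_iff_false, iff_false, not_lt]
      exact hY0 ω
    rw [h, measure_empty]
  have hXset : ∀ t, μ {ω | t < X ω} = tl ν t := fun t => by
    rw [tl_def, hνdef, Measure.map_apply hX measurableSet_Ioi]; rfl
  have hYset : ∀ t, μ {ω | t < Y ω} = tl ρ t := fun t => by
    rw [tl_def, hρdef, Measure.map_apply hY measurableSet_Ioi]; rfl
  have hconv1 : ∀ (m : Measure ℝ) (_ : IsProbabilityMeasure m) (n : ℕ) (t : ℝ),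
      convTail m (n+1) t = (tl (cp m n) t).toReal := by
    intro m hm n t
    unfold convTail
    rw [cp_tail]
  -- hsub reformulations
  have h1 := hsub 1 le_rfl
  rw [Nat.cast_one] at h1
  have hF1 : Tendsto (fun t => (tl ν t).toReal / (tl ν t).toReal) atTop (nhds 1) := by
    refine h1.congr fun t => ?_
    rw [hconv1 ν ‹_› 0 t]
    simp only [cp_zero, tl_def]
  have hpos : ∀ t, tl ν t ≠ 0 := by
    intro t₀ h0
    have hz : Tendsto (fun t => (tl ν t).toReal / (tl ν t).toReal) atTop (nhds 0) := by
      refine Tendsto.congr' ?_ tendsto_const_nhds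
      filter_upwards [eventually_ge_atTop t₀] with t ht
      have hzz : tl ν t = 0 := le_antisymm (h0 ▸ tl_antitone ν ht) (zero_le)
      simp [hzz]
    exact absurd (tendsto_nhds_unique hF1 hz) one_ne_zero
  have hF0 : Tendsto (fun t => (tl ν t).toReal) atTop (nhds 0) := by
    have hIic : Tendsto (fun t => (ν (Iic t)).toReal) atTop (nhds 1) := by
      have h := tendsto_measure_Iic_atTop ν
      rw [measure_univ] at h
      have h2 := (ENNReal.tendsto_toReal ENNReal.one_ne_top).comp h
      rw [ENNReal.toReal_one] at h2; exact h2
    have heq : ∀ t, (tl ν t).toReal = 1 - (ν (Iic t)).toReal := by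
      intro t
      rw [tl_def, ← compl_Iic, measure_compl measurableSet_Iic (measure_ne_top ν _),
        measure_univ, ENNReal.toReal_sub_of_le prob_le_one ENNReal.one_ne_top, ENNReal.toReal_one]
    have h3 : Tendsto (fun t => 1 - (ν (Iic t)).toReal) atTop (nhds (1 - 1)) :=
      tendsto_const_nhds.sub hIic
    rw [sub_self] at h3
    exact h3.congr fun t => (heq t).symm
  have h2' := hsub 2 (by norm_num)
  rw [show ((2:ℕ):ℝ) = 2 by norm_num] at h2'
  have hF2 : Tendsto (fun t => (tl (ν.conv ν) t).toReal / (tl ν t).toReal) atTop (nhds 2) := by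
    refine h2'.congr fun t => ?_
    rw [hconv1 ν ‹_› 1 t]
    simp only [cp_succ, cp_zero, tl_def]
  have hlight' : Tendsto (fun t => (tl ρ t).toReal / (tl ν t).toReal) atTop (nhds 0) := by
    refine hlight.congr fun t => ?_
    rw [hXset, hYset]
  -- the law of the sum is the convolution
  have hpair := (indepFun_iff_map_prod_eq_prod_map_map hX.aemeasurable hY.aemeasurable).mp hindep
  have hmap : μ.map (fun ω => X ω + Y ω) = ν.conv ρ := by
    rw [Measure.conv, ← hpair,
      Measure.map_map (by fun_prop : Measurable fun p : ℝ × ℝ => p.1 + p.2) (hX.prodMk hY)]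
    rfl
  haveI : IsProbabilityMeasure (ν.conv ρ) := by
    rw [← hmap]; exact Measure.isProbabilityMeasure_map (hX.add hY).aemeasurable
  have hm0 : (ν.conv ρ) (Iio 0) = 0 := conv_nonnegSupp ν ρ hν0 hρ0
  -- the induction
  have key : ∀ n : ℕ, Tendsto (fun t => (tl (cp (ν.conv ρ) n) t).toReal / (tl ν t).toReal)
      atTop (nhds ((n:ℝ)+1)) := by
    intro n
    induction n with
    | zero =>
      have hσν : Tendsto (fun t => (tl (ν.conv ν) t).toReal / (tl ν t).toReal) atTop
          (nhds (1+1)) := by rw [show (1:ℝ)+1 = 2 by norm_num]; exact hF2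
      have h := lemmaD (ν := ν) ν ρ hν0 hρ0 hpos hF2 hF0 hF1 hσν hlight'
      rw [show ((0:ℕ):ℝ)+1 = 1 by norm_num]
      exact h
    | succ n ih =>
      haveI := cp_prob (ν.conv ρ) n
      have hcp0 : (cp (ν.conv ρ) n) (Iio 0) = 0 :=
        cp_nonnegSupp _ hm0 n
      have hσ'c := lemmaE (ν := ν) (cp (ν.conv ρ) n) hν0 hcp0 hpos hF2 hF0 ih
      have hσ'0 : ((cp (ν.conv ρ) n).conv ν) (Iio 0) = 0 :=
        conv_nonnegSupp _ ν hcp0 hν0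
      have hσ'ν := lemmaE (ν := ν) ((cp (ν.conv ρ) n).conv ν) hν0 hσ'0 hpos hF2 hF0 hσ'c
      have hD := lemmaD (ν := ν) ((cp (ν.conv ρ) n).conv ν) ρ hν0 hρ0 hpos hF2 hF0
        hσ'c hσ'ν hlight'
      have hid : ∀ t, tl (cp (ν.conv ρ) (n+1)) t = tl (((cp (ν.conv ρ) n).conv ν).conv ρ) t := by
        intro t
        show tl ((ν.conv ρ).conv (cp (ν.conv ρ) n)) t = _
        rw [Measure.conv_comm]
        exact (tl_conv_assoc _ ν ρ t).symm
      have h := hD.congr fun t => by rw [← hid t]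
      convert h using 2
      push_cast
      ring
  have hq : ∀ a b g : ℝ, g ≠ 0 → (a/g)/(b/g) = a/b := by
    intro a b g hg
    rcases eq_or_ne b 0 with rfl | hb
    · simp
    · field_simp
  have hmtail : ∀ t, tl (ν.conv ρ) t ≠ 0 := by
    intro t h0
    exact hpos t (le_antisymm (le_trans (tl_conv_ge ν ρ hρ0 t) h0.le) (zero_le))
  constructor
  · rw [hmap]
    intro n hn
    obtain ⟨k, rfl⟩ : ∃ k, n = k + 1 := ⟨n - 1, (Nat.succ_pred_eq_of_pos hn).symm⟩
    have hdiv := (key k).div (key 0) (by norm_num : ((0:ℕ):ℝ)+1 ≠ 0)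
    have heq : ∀ t, ((fun t => (tl (cp (ν.conv ρ) k) t).toReal / (tl ν t).toReal) /
        (fun t => (tl (cp (ν.conv ρ) 0) t).toReal / (tl ν t).toReal)) t =
        convTail (ν.conv ρ) (k+1) t / ((ν.conv ρ) (Set.Ioi t)).toReal := by
      intro t
      simp only [Pi.div_apply]
      rw [hq _ _ _ (fpos hpos t).ne', hconv1 (ν.conv ρ) ‹_› k t]
      simp only [cp_zero, tl_def]
    have h := hdiv.congr heq
    convert h using 2
    push_cast
    norm_num
  · have h := key 0
    rw [show ((0:ℕ):ℝ)+1 = 1 by norm_num] at h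
    refine h.congr fun t => ?_
    have hXY : μ {ω | t < X ω + Y ω} = tl (ν.conv ρ) t := by
      rw [tl_def, ← hmap, Measure.map_apply (by fun_prop : Measurable fun ω => X ω + Y ω) measurableSet_Ioi]
      rfl
    rw [hXY, hXset]
    simp only [cp_zero]
end

section
/- If $X$ and $Y$ are independent nonnegative subexponential random variables with $\overline{F_Y}(t) \sim c\,\overline{F_X}(t)$ for some $c > 0$, then $X + Y$ is subexponential and $\overline{F_{X+Y}}(t) \sim (1+c)\,\overline{F_X}(t)$. -/
open MeasureTheory ProbabilityTheory Filter

noncomputable def mtail (σ : Measure ℝ) (t : ℝ) : ℝ := (σ (Set.Ioi t)).toReal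

section Basic
variable (σ τ : Measure ℝ)

lemma mtail_nonneg (t : ℝ) : 0 ≤ mtail σ t := ENNReal.toReal_nonneg

variable [IsProbabilityMeasure σ] [IsProbabilityMeasure τ]

lemma mtail_le_one (t : ℝ) : mtail σ t ≤ 1 := by
  have := prob_le_one (μ := σ) (s := Set.Ioi t)
  simpa [mtail] using ENNReal.toReal_le_of_le_ofReal zero_le_one (by simpa using this)

lemma mtail_anti : Antitone (mtail σ) := fun s t hst =>
  ENNReal.toReal_mono (measure_ne_top _ _) (measure_mono (Set.Ioi_subset_Ioi hst))

lemma mtail_meas : Measurable (mtail σ) := (mtail_anti σ).measurable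

lemma measure_Ioi_of_neg (hσ : σ (Set.Iio 0) = 0) {t : ℝ} (ht : t < 0) :
    σ (Set.Ioi t) = 1 := by
  have h1 : σ (Set.Iic t) = 0 :=
    measure_mono_null (fun x hx => lt_of_le_of_lt hx ht) hσ
  have := measure_add_measure_compl (μ := σ) (measurableSet_Iic (a := t))
  rw [h1, zero_add, Set.compl_Iic] at this
  simpa using this

lemma mtail_of_neg (hσ : σ (Set.Iio 0) = 0) {t : ℝ} (ht : t < 0) : mtail σ t = 1 := by
  rw [mtail, measure_Ioi_of_neg σ hσ ht]; simp

lemma mtail_tendsto_zero : Tendsto (mtail σ) atTop (nhds 0) := by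
  have h1 : Tendsto (fun t => (σ (Set.Iic t)).toReal) atTop (nhds 1) := by
    have := tendsto_measure_Iic_atTop (μ := σ)
    have h2 : Tendsto ENNReal.toReal (nhds (σ Set.univ)) (nhds (σ Set.univ).toReal) :=
      ENNReal.tendsto_toReal (measure_ne_top _ _)
    simpa [Function.comp_def] using h2.comp this
  have h3 : ∀ t : ℝ, mtail σ t = 1 - (σ (Set.Iic t)).toReal := by
    intro t
    have := measure_add_measure_compl (μ := σ) (measurableSet_Iic (a := t))
    rw [Set.compl_Iic, measure_univ] at this
    have h4 := ENNReal.toReal_add (measure_ne_top σ (Set.Iic t)) (measure_ne_top σ (Set.Ioi t))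
    rw [this] at h4
    simp only [ENNReal.toReal_one] at h4
    rw [mtail]; linarith
  rw [show mtail σ = fun t => 1 - (σ (Set.Iic t)).toReal from funext h3]
  have := (tendsto_const_nhds (α := ℝ) (x := (1:ℝ)) (f := atTop)).sub h1
  simpa using this

lemma toReal_Ioc {a b : ℝ} (hab : a ≤ b) :
    (σ (Set.Ioc a b)).toReal = mtail σ a - mtail σ b := by
  have hu : Set.Ioc a b ∪ Set.Ioi b = Set.Ioi a := Set.Ioc_union_Ioi_eq_Ioi hab
  have hd : Disjoint (Set.Ioc a b) (Set.Ioi b) := fun s hs1 hs2 x hx =>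
    absurd ((hs2 hx)) (not_lt.2 (hs1 hx).2)
  have := measure_union hd measurableSet_Ioi (μ := σ)
  rw [hu] at this
  have h4 := ENNReal.toReal_add (measure_ne_top σ (Set.Ioc a b)) (measure_ne_top σ (Set.Ioi b))
  rw [← this] at h4
  rw [mtail, mtail, h4]; ring

lemma toReal_Icc0 (hσ : σ (Set.Iio 0) = 0) {a : ℝ} (ha : 0 ≤ a) :
    (σ (Set.Icc 0 a)).toReal = 1 - mtail σ a := by
  have h1 : σ (Set.Iic a) = σ (Set.Icc 0 a) := by
    apply le_antisymm
    · calc σ (Set.Iic a) ≤ σ (Set.Icc 0 a ∪ Set.Iio 0) :=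
            measure_mono (fun x hx => by
              rcases le_or_gt 0 x with h | h
              · exact Or.inl ⟨h, hx⟩
              · exact Or.inr h)
      _ ≤ σ (Set.Icc 0 a) + σ (Set.Iio 0) := measure_union_le _ _
      _ = σ (Set.Icc 0 a) := by rw [hσ, add_zero]
    · exact measure_mono (fun x hx => hx.2)
  have h2 := measure_add_measure_compl (μ := σ) (measurableSet_Iic (a := a))
  rw [Set.compl_Iic, measure_univ, h1] at h2
  have h4 := ENNReal.toReal_add (measure_ne_top σ (Set.Icc 0 a)) (measure_ne_top σ (Set.Ioi a))
  rw [h2] at h4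
  simp only [ENNReal.toReal_one] at h4
  rw [mtail]; linarith

end Basic

section Conv

lemma meas_tail_fun (τ : Measure ℝ) (t : ℝ) : Measurable fun x => τ (Set.Ioi (t - x)) := by
  apply Monotone.measurable
  intro x y hxy
  exact measure_mono (Set.Ioi_subset_Ioi (by linarith))

lemma conv_apply_Ioi (σ τ : Measure ℝ) [SFinite σ] [SFinite τ] (t : ℝ) :
    (σ.conv τ) (Set.Ioi t) = ∫⁻ x, τ (Set.Ioi (t - x)) ∂σ := by
  unfold Measure.conv
  rw [Measure.map_apply (by fun_prop) measurableSet_Ioi,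
    Measure.prod_apply (by exact measurable_add measurableSet_Ioi)]
  congr 1
  ext x
  congr 1
  ext y
  simp [sub_lt_iff_lt_add']

lemma conv_supp (σ τ : Measure ℝ) [SFinite σ] [SFinite τ]
    (hσ : σ (Set.Iio 0) = 0) (hτ : τ (Set.Iio 0) = 0) : (σ.conv τ) (Set.Iio 0) = 0 := by
  unfold Measure.conv
  rw [Measure.map_apply (by fun_prop) measurableSet_Iio,
    Measure.prod_apply (by exact measurable_add measurableSet_Iio)]
  have hae : ∀ᵐ x ∂σ, x ∉ Set.Iio 0 := by
    rw [← compl_mem_ae_iff] at hσ; exact hσ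
  rw [lintegral_eq_zero_iff (by
      apply Antitone.measurable
      intro x y hxy
      exact measure_mono (fun z hz => by
        simp only [Set.mem_preimage, Set.mem_Iio] at *
        linarith))]
  · filter_upwards [hae] with x hx
    simp only [Set.mem_Iio, not_lt] at hx
    have : (Prod.mk x ⁻¹' ((fun p : ℝ × ℝ => p.1 + p.2) ⁻¹' Set.Iio 0)) ⊆ Set.Iio 0 := by
      intro y hy
      simp only [Set.mem_preimage, Set.mem_Iio] at *
      linarith
    exact measure_mono_null this hτ

noncomputable def Wint (σ τ : Measure ℝ) (t : ℝ) : ℝ :=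
  ∫ x in Set.Icc 0 t, mtail τ (t - x) ∂σ

lemma meas_mtail_fun (τ : Measure ℝ) (t : ℝ) : Measurable fun x => mtail τ (t - x) :=
  (meas_tail_fun τ t).ennreal_toReal

lemma integrableOn_mtail (σ τ : Measure ℝ) [IsProbabilityMeasure σ] [IsProbabilityMeasure τ]
    (t : ℝ) (s : Set ℝ) : IntegrableOn (fun x => mtail τ (t - x)) s σ := by
  apply Integrable.integrableOn
  apply (integrable_const (1 : ℝ)).mono' (meas_mtail_fun τ t).aestronglyMeasurable
  filter_upwards with x
  rw [Real.norm_eq_abs, abs_of_nonneg (mtail_nonneg τ _)]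
  exact mtail_le_one τ _

lemma Wint_nonneg (σ τ : Measure ℝ) (t : ℝ) : 0 ≤ Wint σ τ t :=
  setIntegral_nonneg measurableSet_Icc fun x _ => mtail_nonneg τ _

lemma conv_tail_eq (σ τ : Measure ℝ) [IsProbabilityMeasure σ] [IsProbabilityMeasure τ]
    (hσ : σ (Set.Iio 0) = 0) (hτ : τ (Set.Iio 0) = 0) {t : ℝ} (ht : 0 ≤ t) :
    mtail (σ.conv τ) t = mtail σ t + Wint σ τ t := by
  have key : (σ.conv τ) (Set.Ioi t) =
      σ (Set.Ioi t) + ∫⁻ x in Set.Icc 0 t, τ (Set.Ioi (t - x)) ∂σ := by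
    rw [conv_apply_Ioi]
    rw [← lintegral_add_compl (fun x => τ (Set.Ioi (t - x))) (measurableSet_Ioi (a := t))]
    congr 1
    · rw [setLIntegral_congr_fun measurableSet_Ioi
        ((fun x (hx : x ∈ Set.Ioi t) =>
          measure_Ioi_of_neg τ hτ (by simp only [Set.mem_Ioi] at hx; linarith)))]
      simp
    · rw [Set.compl_Ioi]
      apply setLIntegral_congr
      rw [Filter.eventuallyEq_set]
      have hae : ∀ᵐ x ∂σ, x ∉ Set.Iio 0 := by rw [← compl_mem_ae_iff] at hσ; exact hσ
      filter_upwards [hae] with x hx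
      simp only [Set.mem_Iio, not_lt] at hx
      simp only [Set.mem_Iic, Set.mem_Icc]
      exact ⟨fun h => ⟨hx, h⟩, fun h => h.2⟩
  rw [mtail, key, ENNReal.toReal_add (measure_ne_top σ _)]
  · congr 1
    rw [Wint]
    rw [← integral_toReal ((meas_tail_fun τ t).aemeasurable.restrict)]
    · rfl
    · filter_upwards with x
      exact lt_of_le_of_lt (prob_le_one) ENNReal.one_lt_top
  · refine ne_of_lt (lt_of_le_of_lt ?_ (ENNReal.one_lt_top))
    calc ∫⁻ x in Set.Icc 0 t, τ (Set.Ioi (t - x)) ∂σ ≤ ∫⁻ _ in Set.Icc 0 t, 1 ∂σ :=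
          lintegral_mono fun x => prob_le_one
    _ = σ (Set.Icc 0 t) := by simp
    _ ≤ 1 := prob_le_one

end Conv

section Key
variable (F G K : Measure ℝ)
  [IsProbabilityMeasure F] [IsProbabilityMeasure G] [IsProbabilityMeasure K]

lemma tendsto_shift {f : ℝ → ℝ} {l : ℝ} (h : Tendsto f atTop (nhds l)) (A : ℝ) :
    Tendsto (fun t => f (t - A)) atTop (nhds l) := by
  have hsub : Tendsto (fun t : ℝ => t - A) atTop atTop := by
    simpa [sub_eq_add_neg] using tendsto_atTop_add_const_right atTop (-A) (tendsto_id (α := ℝ))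
  exact h.comp hsub

lemma key_W (hFpos : ∀ t, 0 < mtail F t)
    (hlong : ∀ a : ℝ, 0 ≤ a → Tendsto (fun t => mtail F (t - a) / mtail F t) atTop (nhds 1))
    (hNice : Tendsto (fun t => Wint G F t / mtail F t) atTop (nhds 1))
    {c d : ℝ}
    (hGF : Tendsto (fun t => mtail G t / mtail F t) atTop (nhds c))
    (hKF : Tendsto (fun t => mtail K t / mtail F t) atTop (nhds d)) :
    Tendsto (fun t => Wint G K t / mtail F t) atTop (nhds d) := by
  have hd : 0 ≤ d :=
    ge_of_tendsto' hKF fun t => div_nonneg (mtail_nonneg K t) (mtail_nonneg F t)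
  rw [Metric.tendsto_atTop]
  intro ε hε
  set δ : ℝ := ε / 3 with hδdef
  have hδ : 0 < δ := by positivity
  have hδε : δ < ε := by rw [hδdef]; linarith
  -- choose A
  obtain ⟨A₀, hA₀⟩ := (Metric.tendsto_atTop.1 hKF) δ hδ
  set A : ℝ := max A₀ 0 with hAdef
  have hA0 : (0 : ℝ) ≤ A := le_max_right _ _
  have hKb : ∀ s, A ≤ s → (d - δ) * mtail F s ≤ mtail K s ∧ mtail K s ≤ (d + δ) * mtail F s := by
    intro s hs
    have h1 := hA₀ s (le_trans (le_max_left _ _) hs)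
    rw [Real.dist_eq, abs_sub_lt_iff] at h1
    have hf := hFpos s
    constructor
    · have : d - δ < mtail K s / mtail F s := by linarith [h1.2]
      calc (d - δ) * mtail F s ≤ (mtail K s / mtail F s) * mtail F s := by
            apply mul_le_mul_of_nonneg_right (le_of_lt this) (le_of_lt hf)
        _ = mtail K s := by field_simp
    · have : mtail K s / mtail F s < d + δ := by linarith [h1.1]
      calc mtail K s = (mtail K s / mtail F s) * mtail F s := by field_simp
        _ ≤ (d + δ) * mtail F s := by
            apply mul_le_mul_of_nonneg_right (le_of_lt this) (le_of_lt hf)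
  -- the shifted ratio
  have hGshift : Tendsto (fun t => mtail G (t - A) / mtail F t) atTop (nhds c) := by
    have h1 : Tendsto (fun t => mtail G (t - A) / mtail F (t - A)) atTop (nhds c) :=
      tendsto_shift hGF A
    have h2 := hlong A hA0
    have h3 := h1.mul h2
    rw [mul_one] at h3
    apply h3.congr
    intro t
    have hb := (hFpos (t - A)).ne'
    have hc := (hFpos t).ne'
    field_simp
  -- remainder term tends to 0
  have hR : Tendsto (fun t => mtail G (t - A) / mtail F t - mtail G t / mtail F t)
      atTop (nhds 0) := by
    have := hGshift.sub hGF
    simpa using this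
  -- structural inequalities for t ≥ A
  have hUb : ∀ t, A ≤ t →
      Wint G K t ≤ (d + δ) * Wint G F t + (mtail G (t - A) - mtail G t) := by
    intro t ht
    have h0t : (0 : ℝ) ≤ t - A := by linarith
    have hsplitset : Set.Icc 0 t = Set.Icc 0 (t - A) ∪ Set.Ioc (t - A) t :=
      (Set.Icc_union_Ioc_eq_Icc h0t (by linarith)).symm
    have hdisj : Disjoint (Set.Icc 0 (t - A)) (Set.Ioc (t - A) t) := by
      rw [Set.disjoint_left]
      intro x hx1 hx2
      exact absurd hx2.1 (not_lt.2 hx1.2)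
    have hsplit : Wint G K t =
        (∫ x in Set.Icc 0 (t - A), mtail K (t - x) ∂G) +
        (∫ x in Set.Ioc (t - A) t, mtail K (t - x) ∂G) := by
      rw [Wint, hsplitset]
      exact setIntegral_union hdisj measurableSet_Ioc
        (integrableOn_mtail G K t _) (integrableOn_mtail G K t _)
    have u1 : (∫ x in Set.Icc 0 (t - A), mtail K (t - x) ∂G) ≤ (d + δ) * Wint G F t := by
      calc (∫ x in Set.Icc 0 (t - A), mtail K (t - x) ∂G)
          ≤ ∫ x in Set.Icc 0 (t - A), (d + δ) * mtail F (t - x) ∂G := by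
            apply setIntegral_mono_on (integrableOn_mtail G K t _)
              ((integrableOn_mtail G F t _).const_mul _) measurableSet_Icc
            intro x hx
            exact (hKb (t - x) (by linarith [hx.2])).2
        _ = (d + δ) * ∫ x in Set.Icc 0 (t - A), mtail F (t - x) ∂G := integral_const_mul _ _
        _ ≤ (d + δ) * Wint G F t := by
            apply mul_le_mul_of_nonneg_left _ (by linarith)
            apply setIntegral_mono_set (integrableOn_mtail G F t _)
              (ae_of_all _ fun x => mtail_nonneg F _)
            exact HasSubset.Subset.eventuallyLE (Set.Icc_subset_Icc_right (by linarith))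
    have u2 : (∫ x in Set.Ioc (t - A) t, mtail K (t - x) ∂G)
        ≤ mtail G (t - A) - mtail G t := by
      calc (∫ x in Set.Ioc (t - A) t, mtail K (t - x) ∂G)
          ≤ ∫ _ in Set.Ioc (t - A) t, (1 : ℝ) ∂G := by
            apply setIntegral_mono_on (integrableOn_mtail G K t _)
              (integrableOn_const (measure_ne_top _ _)) measurableSet_Ioc
            intro x _
            exact mtail_le_one K _
        _ = (G (Set.Ioc (t - A) t)).toReal := by rw [setIntegral_const]; simp; rfl
        _ = mtail G (t - A) - mtail G t := toReal_Ioc G (by linarith)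
    linarith [hsplit, u1, u2]
  have hLb : ∀ t, A ≤ t →
      (d - δ) * (Wint G F t - (mtail G (t - A) - mtail G t)) ≤ Wint G K t ∨ d - δ < 0 := by
    intro t ht
    rcases lt_or_ge (d - δ) 0 with h | h
    · exact Or.inr h
    left
    have h0t : (0 : ℝ) ≤ t - A := by linarith
    have lA : Wint G F t - (mtail G (t - A) - mtail G t)
        ≤ ∫ x in Set.Icc 0 (t - A), mtail F (t - x) ∂G := by
      have hsplitset : Set.Icc 0 t = Set.Icc 0 (t - A) ∪ Set.Ioc (t - A) t :=
        (Set.Icc_union_Ioc_eq_Icc h0t (by linarith)).symm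
      have hdisj : Disjoint (Set.Icc 0 (t - A)) (Set.Ioc (t - A) t) := by
        rw [Set.disjoint_left]
        intro x hx1 hx2
        exact absurd hx2.1 (not_lt.2 hx1.2)
      have hsplit : Wint G F t =
          (∫ x in Set.Icc 0 (t - A), mtail F (t - x) ∂G) +
          (∫ x in Set.Ioc (t - A) t, mtail F (t - x) ∂G) := by
        rw [Wint, hsplitset]
        exact setIntegral_union hdisj measurableSet_Ioc
          (integrableOn_mtail G F t _) (integrableOn_mtail G F t _)
      have u2 : (∫ x in Set.Ioc (t - A) t, mtail F (t - x) ∂G)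
          ≤ mtail G (t - A) - mtail G t := by
        calc (∫ x in Set.Ioc (t - A) t, mtail F (t - x) ∂G)
            ≤ ∫ _ in Set.Ioc (t - A) t, (1 : ℝ) ∂G := by
              apply setIntegral_mono_on (integrableOn_mtail G F t _)
                (integrableOn_const (measure_ne_top _ _)) measurableSet_Ioc
              intro x _
              exact mtail_le_one F _
          _ = (G (Set.Ioc (t - A) t)).toReal := by rw [setIntegral_const]; simp; rfl
          _ = mtail G (t - A) - mtail G t := toReal_Ioc G (by linarith)
      linarith
    calc (d - δ) * (Wint G F t - (mtail G (t - A) - mtail G t))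
        ≤ (d - δ) * ∫ x in Set.Icc 0 (t - A), mtail F (t - x) ∂G :=
          mul_le_mul_of_nonneg_left lA h
      _ = ∫ x in Set.Icc 0 (t - A), (d - δ) * mtail F (t - x) ∂G :=
          (integral_const_mul _ _).symm
      _ ≤ ∫ x in Set.Icc 0 (t - A), mtail K (t - x) ∂G := by
          apply setIntegral_mono_on ((integrableOn_mtail G F t _).const_mul _)
            (integrableOn_mtail G K t _) measurableSet_Icc
          intro x hx
          exact (hKb (t - x) (by linarith [hx.2])).1
      _ ≤ Wint G K t := by
          apply setIntegral_mono_set (integrableOn_mtail G K t _)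
            (ae_of_all _ fun x => mtail_nonneg K _)
          exact HasSubset.Subset.eventuallyLE (Set.Icc_subset_Icc_right (by linarith))
  -- limit functions
  have hU : Tendsto (fun t => (d + δ) * (Wint G F t / mtail F t) +
      (mtail G (t - A) / mtail F t - mtail G t / mtail F t)) atTop (nhds (d + δ)) := by
    have := ((hNice.const_mul (d + δ)).add hR)
    simpa using this
  have hL : Tendsto (fun t => (d - δ) * (Wint G F t / mtail F t -
      (mtail G (t - A) / mtail F t - mtail G t / mtail F t))) atTop (nhds (d - δ)) := by
    have := (hNice.sub hR).const_mul (d - δ)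
    simpa using this
  have hUe := hU.eventually_lt_const (show d + δ < d + ε by linarith)
  have hLe := hL.eventually_const_lt (show d - ε < d - δ by linarith)
  rw [eventually_atTop] at hUe hLe
  obtain ⟨B₁, hB₁⟩ := hUe
  obtain ⟨B₂, hB₂⟩ := hLe
  refine ⟨max A (max B₁ B₂), fun t ht => ?_⟩
  have htA : A ≤ t := le_trans (le_max_left _ _) ht
  have htB₁ : B₁ ≤ t := le_trans (le_trans (le_max_left _ _) (le_max_right _ _)) ht
  have htB₂ : B₂ ≤ t := le_trans (le_trans (le_max_right _ _) (le_max_right _ _)) ht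
  have hf := hFpos t
  rw [Real.dist_eq, abs_sub_lt_iff]
  constructor
  · -- upper
    have h1 := hUb t htA
    have h2 : Wint G K t / mtail F t ≤ (d + δ) * (Wint G F t / mtail F t) +
        (mtail G (t - A) / mtail F t - mtail G t / mtail F t) := by
      calc Wint G K t / mtail F t
          ≤ ((d + δ) * Wint G F t + (mtail G (t - A) - mtail G t)) / mtail F t :=
            (div_le_div_iff_of_pos_right hf).2 h1
        _ = _ := by ring
    have := hB₁ t htB₁
    linarith
  · -- lower
    rcases hLb t htA with h1 | h1
    · have h2 : (d - δ) * (Wint G F t / mtail F t -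
          (mtail G (t - A) / mtail F t - mtail G t / mtail F t)) ≤ Wint G K t / mtail F t := by
        calc (d - δ) * (Wint G F t / mtail F t -
            (mtail G (t - A) / mtail F t - mtail G t / mtail F t))
            = ((d - δ) * (Wint G F t - (mtail G (t - A) - mtail G t))) / mtail F t := by ring
          _ ≤ Wint G K t / mtail F t := (div_le_div_iff_of_pos_right hf).2 h1
      have := hB₂ t htB₂
      linarith
    · have h2 : 0 ≤ Wint G K t / mtail F t :=
        div_nonneg (Wint_nonneg G K t) (le_of_lt hf)
      have hdlt : d < δ := by linarith
      linarith
end Key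

section ConvAlg

lemma meas_sum (n : ℕ) : Measurable (fun x : Fin n → ℝ => ∑ i, x i) :=
  Finset.measurable_sum Finset.univ (fun i _ => measurable_pi_apply i)

lemma conv_assoc (μ ν ρ : Measure ℝ) [SFinite μ] [SFinite ν] [SFinite ρ] :
    (μ.conv ν).conv ρ = μ.conv (ν.conv ρ) := by
  have hm : Measurable fun p : ℝ × ℝ => p.1 + p.2 := measurable_add
  unfold Measure.conv
  conv_lhs => rw [show ρ = Measure.map id ρ from (Measure.map_id).symm]
  conv_rhs => rw [show μ = Measure.map id μ from (Measure.map_id).symm]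
  rw [Measure.map_prod_map _ _ hm measurable_id,
    Measure.map_map hm (hm.prodMap measurable_id),
    Measure.map_prod_map _ _ measurable_id hm,
    Measure.map_map hm (measurable_id.prodMap hm),
    ← Measure.prodAssoc_prod,
    Measure.map_map (hm.comp (measurable_id.prodMap hm)) (MeasurableEquiv.measurable _)]
  congr 1
  funext p
  obtain ⟨⟨a, b⟩, c⟩ := p
  simp [Prod.map, MeasurableEquiv.prodAssoc]
  ring

noncomputable def convMeas (ν : Measure ℝ) (n : ℕ) : Measure ℝ :=
  (Measure.pi fun _ : Fin n => ν).map (fun x => ∑ i, x i)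

instance convMeas_prob (ν : Measure ℝ) [IsProbabilityMeasure ν] (n : ℕ) :
    IsProbabilityMeasure (convMeas ν n) :=
  Measure.isProbabilityMeasure_map (meas_sum n).aemeasurable

lemma convMeas_zero (ν : Measure ℝ) : convMeas ν 0 = Measure.dirac 0 := by
  rw [convMeas, Measure.pi_of_empty, Measure.map_dirac' (meas_sum 0)]
  simp

lemma convMeas_succ (ν : Measure ℝ) [IsProbabilityMeasure ν] (n : ℕ) :
    convMeas ν (n + 1) = ν.conv (convMeas ν n) := by
  have hmp := measurePreserving_piFinSuccAbove (fun _ : Fin (n + 1) => ν) 0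
  rw [convMeas, convMeas]
  unfold Measure.conv
  have he : (fun x : Fin (n + 1) → ℝ => ∑ i, x i) =
      (fun p : ℝ × (Fin n → ℝ) => p.1 + ∑ i, p.2 i) ∘
        (MeasurableEquiv.piFinSuccAbove (fun _ : Fin (n + 1) => ℝ) 0) := by
    funext x
    simp only [Function.comp_apply, MeasurableEquiv.piFinSuccAbove_apply]
    exact Fin.sum_univ_succAbove x 0
  rw [he, ← Measure.map_map (by fun_prop) (MeasurableEquiv.measurable _), hmp.map_eq]
  have hprod : ν.prod (Measure.map (fun x : Fin n → ℝ => ∑ i, x i)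
      (Measure.pi fun _ : Fin n => ν)) =
      Measure.map (Prod.map id (fun x : Fin n → ℝ => ∑ i, x i))
        (ν.prod (Measure.pi fun _ : Fin n => ν)) := by
    conv_lhs => rw [show ν = Measure.map id ν from (Measure.map_id (μ := ν)).symm]
    rw [Measure.map_prod_map _ _ measurable_id (meas_sum n), Measure.map_id]
  rw [hprod, Measure.map_map measurable_add (measurable_id.prodMap (meas_sum n))]
  congr 1

end ConvAlg

section Ffacts

lemma convTail_eq_mtail (ν : Measure ℝ) (n : ℕ) (t : ℝ) :
    convTail ν n t = mtail (convMeas ν n) t := by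
  rw [convTail, mtail, convMeas, Measure.map_apply (meas_sum n) measurableSet_Ioi]
  rfl

variable (F : Measure ℝ) [IsProbabilityMeasure F]

lemma mtail_pos_of_subexp (hsub : Subexponential F) : ∀ t, 0 < mtail F t := by
  intro t
  rcases lt_or_ge 0 (mtail F t) with h | h
  · exact h
  exfalso
  have hz : mtail F t = 0 := le_antisymm h (mtail_nonneg F t)
  have h0 : F (Set.Ioi t) = 0 := by
    rw [mtail] at hz
    exact (ENNReal.toReal_eq_zero_iff _).1 hz |>.resolve_right (measure_ne_top F _)
  have hev : (fun s => convTail F 1 s / (F (Set.Ioi s)).toReal)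
      =ᶠ[atTop] (fun _ => (0 : ℝ)) := by
    filter_upwards [eventually_ge_atTop t] with s hs
    have : F (Set.Ioi s) = 0 := measure_mono_null (Set.Ioi_subset_Ioi hs) h0
    simp [this]
  have h1 : Tendsto (fun _ : ℝ => (0 : ℝ)) atTop (nhds 1) := by
    have h0 := hsub 1 le_rfl
    rw [Nat.cast_one] at h0
    exact h0.congr' hev
  exact one_ne_zero (tendsto_nhds_unique tendsto_const_nhds h1).symm

lemma conv_dirac_zero' (ν : Measure ℝ) [SFinite ν] : ν.conv (Measure.dirac 0) = ν := by
  simp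

lemma convMeas_two (F : Measure ℝ) [IsProbabilityMeasure F] :
    convMeas F 2 = F.conv F := by
  rw [convMeas_succ, convMeas_succ, convMeas_zero]
  simp

lemma niceF (hFs : F (Set.Iio 0) = 0) (hsub : Subexponential F) :
    Tendsto (fun t => Wint F F t / mtail F t) atTop (nhds 1) := by
  have hFpos := mtail_pos_of_subexp F hsub
  have h2 := hsub 2 (by norm_num)
  have h3 : Tendsto (fun t => convTail F 2 t / (F (Set.Ioi t)).toReal - 1)
      atTop (nhds 1) := by
    have := h2.sub (tendsto_const_nhds (x := (1 : ℝ)))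
    norm_num at this
    exact this
  apply h3.congr'
  filter_upwards [eventually_ge_atTop (0 : ℝ)] with t ht
  have key : convTail F 2 t = mtail F t + Wint F F t := by
    rw [convTail_eq_mtail, convMeas_two, conv_tail_eq F F hFs hFs ht]
  rw [key]
  have hf := (hFpos t).ne'
  show (mtail F t + Wint F F t) / mtail F t - 1 = _
  field_simp
  ring

lemma longF (hFs : F (Set.Iio 0) = 0) (hsub : Subexponential F) :
    ∀ a : ℝ, 0 ≤ a → Tendsto (fun t => mtail F (t - a) / mtail F t) atTop (nhds 1) := by
  intro a ha
  have hFpos := mtail_pos_of_subexp F hsub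
  have hNice := niceF F hFs hsub
  set m : ℝ := mtail F a with hm
  have hmpos : 0 < m := hFpos a
  have hlow : ∀ t : ℝ, 1 ≤ mtail F (t - a) / mtail F t := by
    intro t
    rw [le_div_iff₀ (hFpos t), one_mul]
    exact mtail_anti F (by linarith)
  -- main inequality for t ≥ a
  have hineq : ∀ t : ℝ, a ≤ t →
      (1 - m) * mtail F t + mtail F (t - a) * (m - mtail F t) ≤ Wint F F t := by
    intro t ht
    have hsplitset : Set.Icc 0 t = Set.Icc 0 a ∪ Set.Ioc a t :=
      (Set.Icc_union_Ioc_eq_Icc ha ht).symm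
    have hdisj : Disjoint (Set.Icc 0 a) (Set.Ioc a t) := by
      rw [Set.disjoint_left]
      intro x hx1 hx2
      exact absurd hx2.1 (not_lt.2 hx1.2)
    have hsplit : Wint F F t =
        (∫ x in Set.Icc 0 a, mtail F (t - x) ∂F) +
        (∫ x in Set.Ioc a t, mtail F (t - x) ∂F) := by
      rw [Wint, hsplitset]
      exact setIntegral_union hdisj measurableSet_Ioc
        (integrableOn_mtail F F t _) (integrableOn_mtail F F t _)
    have l1 : (1 - m) * mtail F t ≤ ∫ x in Set.Icc 0 a, mtail F (t - x) ∂F := by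
      have : ∫ _ in Set.Icc 0 a, mtail F t ∂F = (F (Set.Icc 0 a)).toReal * mtail F t := by
        rw [setIntegral_const]; simp [mul_comm, Measure.real]
      rw [← toReal_Icc0 F hFs ha]
      calc (F (Set.Icc 0 a)).toReal * mtail F t
          = ∫ _ in Set.Icc 0 a, mtail F t ∂F := this.symm
        _ ≤ ∫ x in Set.Icc 0 a, mtail F (t - x) ∂F := by
            apply setIntegral_mono_on
              (integrableOn_const (measure_ne_top _ _))
              (integrableOn_mtail F F t _) measurableSet_Icc
            intro x hx
            exact mtail_anti F (by linarith [hx.1])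
    have l2 : mtail F (t - a) * (m - mtail F t) ≤ ∫ x in Set.Ioc a t, mtail F (t - x) ∂F := by
      have : ∫ _ in Set.Ioc a t, mtail F (t - a) ∂F
          = (F (Set.Ioc a t)).toReal * mtail F (t - a) := by
        rw [setIntegral_const]; simp [mul_comm, Measure.real]
      rw [show m - mtail F t = (F (Set.Ioc a t)).toReal from (toReal_Ioc F ht).symm,
        mul_comm]
      calc (F (Set.Ioc a t)).toReal * mtail F (t - a)
          = ∫ _ in Set.Ioc a t, mtail F (t - a) ∂F := this.symm
        _ ≤ ∫ x in Set.Ioc a t, mtail F (t - x) ∂F := by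
            apply setIntegral_mono_on
              (integrableOn_const (measure_ne_top _ _))
              (integrableOn_mtail F F t _) measurableSet_Ioc
            intro x hx
            exact mtail_anti F (by linarith [hx.1])
    linarith
  -- upper bound function
  have hdenom : Tendsto (fun t => m - mtail F t) atTop (nhds m) := by
    have := (tendsto_const_nhds (x := m) (f := atTop (α := ℝ))).sub (mtail_tendsto_zero F)
    simpa using this
  have hnum : Tendsto (fun t => Wint F F t / mtail F t - (1 - m)) atTop (nhds m) := by
    have := hNice.sub (tendsto_const_nhds (x := (1 - m)))
    have h' : (1 : ℝ) - (1 - m) = m := by ring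
    rwa [h'] at this
  have hU : Tendsto (fun t => (Wint F F t / mtail F t - (1 - m)) / (m - mtail F t))
      atTop (nhds 1) := by
    have := hnum.div hdenom (ne_of_gt hmpos)
    rwa [div_self (ne_of_gt hmpos)] at this
  apply tendsto_of_tendsto_of_tendsto_of_le_of_le' tendsto_const_nhds hU
  · exact Filter.Eventually.of_forall hlow
  · have hev : ∀ᶠ t in atTop, mtail F t < m / 2 :=
      (mtail_tendsto_zero F).eventually_lt_const (by linarith)
    filter_upwards [hev, eventually_ge_atTop a] with t h1 h2
    have hpos2 : 0 < m - mtail F t := by linarith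
    rw [le_div_iff₀ hpos2]
    have := hineq t h2
    have hft := hFpos t
    -- divide the main inequality by mtail F t
    have hdiv : (1 - m) + (mtail F (t - a) / mtail F t) * (m - mtail F t)
        ≤ Wint F F t / mtail F t := by
      rw [← div_le_div_iff_of_pos_right hft] at this
      · calc (1 - m) + mtail F (t - a) / mtail F t * (m - mtail F t)
            = ((1 - m) * mtail F t + mtail F (t - a) * (m - mtail F t)) / mtail F t := by
              field_simp
          _ ≤ Wint F F t / mtail F t := this
    linarith
end Ffacts

section Assemble

lemma conv_tail_lim (F G K : Measure ℝ)
    [IsProbabilityMeasure F] [IsProbabilityMeasure G] [IsProbabilityMeasure K]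
    (hGs : G (Set.Iio 0) = 0) (hKs : K (Set.Iio 0) = 0)
    (hFpos : ∀ t, 0 < mtail F t)
    (hlong : ∀ a : ℝ, 0 ≤ a → Tendsto (fun t => mtail F (t - a) / mtail F t) atTop (nhds 1))
    (hNice : Tendsto (fun t => Wint G F t / mtail F t) atTop (nhds 1))
    {c d : ℝ}
    (hGF : Tendsto (fun t => mtail G t / mtail F t) atTop (nhds c))
    (hKF : Tendsto (fun t => mtail K t / mtail F t) atTop (nhds d)) :
    Tendsto (fun t => mtail (G.conv K) t / mtail F t) atTop (nhds (c + d)) := by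
  have h1 := key_W F G K hFpos hlong hNice hGF hKF
  have h2 := hGF.add h1
  apply h2.congr'
  filter_upwards [eventually_ge_atTop (0 : ℝ)] with t ht
  rw [conv_tail_eq G K hGs hKs ht, add_div]

lemma main_meas (F G : Measure ℝ) [IsProbabilityMeasure F] [IsProbabilityMeasure G]
    (hFs : F (Set.Iio 0) = 0) (hGs : G (Set.Iio 0) = 0)
    (hsubF : Subexponential F) (c : ℝ) (hc : 0 < c)
    (hGF : Tendsto (fun t => mtail G t / mtail F t) atTop (nhds c)) :
    Subexponential (F.conv G) ∧
      Tendsto (fun t => mtail (F.conv G) t / mtail F t) atTop (nhds (1 + c)) := by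
  have hFpos := mtail_pos_of_subexp F hsubF
  have hlong := longF F hFs hsubF
  have hNiceF := niceF F hFs hsubF
  have hFF : Tendsto (fun t => mtail F t / mtail F t) atTop (nhds 1) := by
    apply Tendsto.congr' _ (tendsto_const_nhds (x := (1 : ℝ)))
    filter_upwards with t
    rw [div_self (hFpos t).ne']
  -- tail of F ∗ G
  have hH : Tendsto (fun t => mtail (F.conv G) t / mtail F t) atTop (nhds (1 + c)) :=
    conv_tail_lim F F G hFs hGs hFpos hlong hNiceF hFF hGF
  -- G is nice
  have hNiceG : Tendsto (fun t => Wint G F t / mtail F t) atTop (nhds 1) := by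
    have h3 := hH.sub hGF
    rw [show (1 : ℝ) + c - c = 1 by ring] at h3
    apply h3.congr'
    filter_upwards [eventually_ge_atTop (0 : ℝ)] with t ht
    rw [show F.conv G = G.conv F from Measure.conv_comm F G,
      conv_tail_eq G F hGs hFs ht]
    have hf := (hFpos t).ne'
    field_simp
    ring
  set H : Measure ℝ := F.conv G with hHdef
  have hHs : H (Set.Iio 0) = 0 := conv_supp F G hFs hGs
  -- iterated convolution tails
  have hKsupp : ∀ n, (convMeas H n) (Set.Iio 0) = 0 := by
    intro n
    induction n with
    | zero =>
        rw [convMeas_zero]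
        simp
    | succ n ih =>
        rw [convMeas_succ]
        exact conv_supp H _ hHs ih
  have hind : ∀ n : ℕ, Tendsto (fun t => mtail (convMeas H n) t / mtail F t)
      atTop (nhds (n * (1 + c))) := by
    intro n
    induction n with
    | zero =>
        simp only [Nat.cast_zero, zero_mul]
        apply Tendsto.congr' _ (tendsto_const_nhds (x := (0 : ℝ)))
        filter_upwards [eventually_ge_atTop (0 : ℝ)] with t ht
        rw [convMeas_zero, mtail]
        rw [Measure.dirac_apply' _ measurableSet_Ioi]
        have : (0 : ℝ) ∉ Set.Ioi t := by simp [not_lt.2 ht]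
        rw [Set.indicator_of_notMem this]
        simp
    | succ n ih =>
        have h4 : Tendsto (fun t => mtail (F.conv (convMeas H n)) t / mtail F t)
            atTop (nhds (1 + n * (1 + c))) :=
          conv_tail_lim F F (convMeas H n) hFs (hKsupp n) hFpos hlong hNiceF hFF ih
        have h5 : Tendsto (fun t => mtail (G.conv (F.conv (convMeas H n))) t / mtail F t)
            atTop (nhds (c + (1 + n * (1 + c)))) :=
          conv_tail_lim F G (F.conv (convMeas H n)) hGs
            (conv_supp F _ hFs (hKsupp n)) hFpos hlong hNiceG hGF h4
        have heq : convMeas H (n + 1) = G.conv (F.conv (convMeas H n)) := by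
          rw [convMeas_succ, hHdef, Measure.conv_comm F G, conv_assoc]
        rw [heq]
        have : ((n : ℝ) + 1) * (1 + c) = c + (1 + n * (1 + c)) := by ring
        rw [Nat.cast_succ, this]
        exact h5
  have h1c : (0 : ℝ) < 1 + c := by linarith
  have hHpos : ∀ t, 0 < mtail H t := by
    intro t
    rcases lt_or_ge t 0 with h | h
    · rw [mtail_of_neg H hHs h]; norm_num
    · have := conv_tail_eq F G hFs hGs h
      have := Wint_nonneg F G t
      have := hFpos t
      rw [hHdef]
      rw [conv_tail_eq F G hFs hGs h]
      linarith
  have hinv : Tendsto (fun t => mtail F t / mtail H t) atTop (nhds (1 + c)⁻¹) := by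
    have := hH.inv₀ h1c.ne'
    apply this.congr
    intro t
    rw [inv_div]
  constructor
  · intro n hn
    have h6 := (hind n).mul hinv
    have h7 : (n : ℝ) * (1 + c) * (1 + c)⁻¹ = n := by field_simp
    rw [h7] at h6
    apply h6.congr
    intro t
    rw [convTail_eq_mtail]
    show _ = mtail (convMeas H n) t / mtail H t
    rw [div_mul_div_comm, mul_comm (mtail (convMeas H n) t) (mtail F t),
      mul_div_mul_left _ _ (hFpos t).ne']
  · exact hH

end Assemble

theorem subexponential_add_tail_equivalent
    {Ω : Type*} [MeasurableSpace Ω] (μ : Measure Ω) [IsProbabilityMeasure μ]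
    (X Y : Ω → ℝ) (hX : Measurable X) (hY : Measurable Y)
    (hX0 : ∀ ω, 0 ≤ X ω) (hY0 : ∀ ω, 0 ≤ Y ω)
    (hindep : IndepFun X Y μ)
    (hsubX : Subexponential (μ.map X)) (hsubY : Subexponential (μ.map Y))
    (c : ℝ) (hc : 0 < c)
    (htaileq : Tendsto (fun t => (μ {ω | t < Y ω}).toReal / (μ {ω | t < X ω}).toReal)
      atTop (nhds c)) :
    Subexponential (μ.map fun ω => X ω + Y ω) ∧
    Tendsto (fun t => (μ {ω | t < X ω + Y ω}).toReal / (μ {ω | t < X ω}).toReal)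
      atTop (nhds (1 + c)) := by
  set F : Measure ℝ := μ.map X with hFdef
  set G : Measure ℝ := μ.map Y with hGdef
  haveI : IsProbabilityMeasure F := Measure.isProbabilityMeasure_map hX.aemeasurable
  haveI : IsProbabilityMeasure G := Measure.isProbabilityMeasure_map hY.aemeasurable
  have hFs : F (Set.Iio 0) = 0 := by
    rw [hFdef, Measure.map_apply hX measurableSet_Iio]
    have : X ⁻¹' Set.Iio 0 = ∅ := by
      ext ω; simp [not_lt.2 (hX0 ω)]
    rw [this, measure_empty]
  have hGs : G (Set.Iio 0) = 0 := by
    rw [hGdef, Measure.map_apply hY measurableSet_Iio]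
    have : Y ⁻¹' Set.Iio 0 = ∅ := by
      ext ω; simp [not_lt.2 (hY0 ω)]
    rw [this, measure_empty]
  have hXt : ∀ t : ℝ, μ {ω | t < X ω} = F (Set.Ioi t) := by
    intro t
    rw [hFdef, Measure.map_apply hX measurableSet_Ioi]
    rfl
  have hYt : ∀ t : ℝ, μ {ω | t < Y ω} = G (Set.Ioi t) := by
    intro t
    rw [hGdef, Measure.map_apply hY measurableSet_Ioi]
    rfl
  have hGF : Tendsto (fun t => mtail G t / mtail F t) atTop (nhds c) := by
    apply htaileq.congr
    intro t
    rw [mtail, mtail, hXt, hYt]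
  obtain ⟨hs, ht⟩ := main_meas F G hFs hGs hsubX c hc hGF
  have hmap : μ.map (fun ω => X ω + Y ω) = F.conv G := by
    have hpair : μ.map (fun ω => (X ω, Y ω)) = F.prod G :=
      (indepFun_iff_map_prod_eq_prod_map_map hX.aemeasurable hY.aemeasurable).1 hindep
    rw [Measure.conv, ← hpair,
      Measure.map_map measurable_add (hX.prodMk hY)]
    rfl
  constructor
  · rw [hmap]
    exact hs
  · apply ht.congr
    intro t
    congr 1
    · rw [show {ω | t < X ω + Y ω} = (fun ω => X ω + Y ω) ⁻¹' Set.Ioi t from rfl,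
        ← Measure.map_apply (show Measurable (fun ω => X ω + Y ω) from hX.add hY) measurableSet_Ioi, hmap]
      rfl
    · rw [mtail, hXt]
end

section
/- Let $X_1, X_2, \ldots$ be independent nonnegative random variables with distribution functions $F_i$ that are tail-equivalent: $\overline{F_i}(t) \sim a_i \overline{F_1}(t)$ with $a_i > 0$. Let $J$ be an independent $\mathbb{N}$-valued random variable and $Y = X_J$ with distribution function $F(t) = \sum_i \mathbb{P}(J=i) F_i(t)$. If the family $\{\overline{F_J}(t)/\overline{F_1}(t) : t \geq 0\}$ is uniformly integrable, then $\overline{F}(t) \sim (\mathbb{E}\, a_J)\, \overline{F_1}(t)$ as $t \to \infty$. -/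
open MeasureTheory ProbabilityTheory Filter

theorem mixture_tail_equivalence
    {Ω : Type*} [MeasurableSpace Ω] (μ : Measure Ω) [IsProbabilityMeasure μ]
    -- Fbar i is the complementary distribution function of Xᵢ
    (Fbar : ℕ → ℝ → ℝ) (hF01 : ∀ i t, Fbar i t ∈ Set.Icc (0 : ℝ) 1)
    (hFpos : ∀ t, 0 < Fbar 1 t)
    (a : ℕ → ℝ) (ha : ∀ i, 0 < a i)
    -- tail equivalence: Fbar i (t) ∼ aᵢ Fbar 1 (t)
    (htaileq : ∀ i, Tendsto (fun t => Fbar i t / Fbar 1 t) atTop (nhds (a i)))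
    (J : Ω → ℕ) (hJ : Measurable J)
    -- uniform integrability of the family {ω ↦ Fbar_{J ω}(t)/Fbar 1 (t) : t ≥ 0}
    (hui : UniformIntegrable (fun (t : ℝ) (ω : Ω) => Fbar (J ω) t / Fbar 1 t) 1 μ) :
    Tendsto (fun t => (∑' i : ℕ, (μ {ω | J ω = i}).toReal * Fbar i t) / Fbar 1 t)
      atTop (nhds (∫ ω, a (J ω) ∂μ)) := by
  -- step 1: rewrite the sum as an integral
  have hkey : ∀ t, (∑' i : ℕ, (μ {ω | J ω = i}).toReal * Fbar i t) / Fbar 1 t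
      = ∫ ω, Fbar (J ω) t / Fbar 1 t ∂μ := by
    intro t
    have hint : Integrable (fun i => Fbar i t) (μ.map J) := by
      have : IsProbabilityMeasure (μ.map J) := Measure.isProbabilityMeasure_map hJ.aemeasurable
      refine (integrable_const (1 : ℝ)).mono'
        ((measurable_of_countable _).aestronglyMeasurable) (Filter.Eventually.of_forall ?_)
      intro i
      have h := hF01 i t
      rw [Real.norm_eq_abs, abs_of_nonneg h.1]
      exact h.2
    have h1 : ∫ ω, Fbar (J ω) t ∂μ = ∑' i : ℕ, (μ {ω | J ω = i}).toReal * Fbar i t := by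
      have hm := integral_map (μ := μ) (f := fun i => Fbar i t) hJ.aemeasurable
        ((measurable_of_countable _).aestronglyMeasurable)
      rw [← hm, integral_countable' hint]
      congr 1
      ext i
      rw [measureReal_def, Measure.map_apply hJ (measurableSet_singleton i)]
      rfl
    rw [← h1, ← integral_div]
  simp only [hkey]
  -- step 2: reduce to sequences
  refine tendsto_of_seq_tendsto (fun u hu => ?_)
  set f : ℕ → Ω → ℝ := fun n ω => Fbar (J ω) (u n) / Fbar 1 (u n) with hf_def
  set g : Ω → ℝ := fun ω => a (J ω) with hg_def
  have hfm : ∀ n, AEStronglyMeasurable (f n) μ := fun n => hui.1 (u n)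
  have hfg : ∀ ω, Tendsto (fun n => f n ω) atTop (nhds (g ω)) :=
    fun ω => (htaileq (J ω)).comp hu
  have hgm : Measurable g := (measurable_of_countable a).comp hJ
  obtain ⟨C, hC⟩ := hui.2.2
  have hgLp : MemLp g 1 μ := by
    refine ⟨hgm.aestronglyMeasurable, ?_⟩
    calc eLpNorm g 1 μ ≤ atTop.liminf fun n => eLpNorm (f n) 1 μ :=
          Lp.eLpNorm_lim_le_liminf_eLpNorm hfm g (Filter.Eventually.of_forall hfg)
      _ ≤ (C : ENNReal) := liminf_le_of_frequently_le'
          (Filter.Frequently.of_forall fun n => hC (u n))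
      _ < ⊤ := ENNReal.coe_lt_top
  have hgi : Integrable g μ := memLp_one_iff_integrable.mp hgLp
  have hui' : UnifIntegrable f 1 μ := by
    intro ε hε
    obtain ⟨δ, hδ, h⟩ := hui.2.1 hε
    exact ⟨δ, hδ, fun n s hs hμs => h (u n) s hs hμs⟩
  have hL1 : Tendsto (fun n => eLpNorm (f n - g) 1 μ) atTop (nhds 0) :=
    tendsto_Lp_finite_of_tendsto_ae le_rfl ENNReal.one_ne_top hfm hgLp hui'
      (Filter.Eventually.of_forall hfg)
  have hfi : ∀ n, Integrable (f n) μ := by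
    intro n
    refine (integrable_const (1 / Fbar 1 (u n))).mono' (hfm n) (Filter.Eventually.of_forall ?_)
    intro ω
    have h := hF01 (J ω) (u n)
    have hp := hFpos (u n)
    rw [Real.norm_eq_abs, abs_div, abs_of_nonneg h.1, abs_of_pos hp]
    exact (div_le_div_iff_of_pos_right hp).mpr h.2
  exact tendsto_integral_of_L1' g hgi.aestronglyMeasurable (Filter.Eventually.of_forall hfi) hL1
end

section
/- Let $X$ be a recurrent birth and death process on $\mathbb{Z}^+$ with birth rates $b_i$ equal to death rates $d_i = b_i$ at each state $i \geq 1$, and suppose the rates $b_i$ are nonincreasing in $i$. Let $\tau_0^{(1)}$ be the hitting time of $0$ from state $1$, with distribution function $F$. Then $\limsup_{t\to\infty} \overline{F^{*2}}(t)/\overline{F}(t) \leq 2$, and hence $\tau_0^{(1)}$ is subexponential. -/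
open MeasureTheory Filter
open scoped ENNReal Topology

section Aux
open Set

namespace BDaux


variable (ν : Measure ℝ) [IsProbabilityMeasure ν]

noncomputable def E (n : ℕ) (t : ℝ) : ℝ≥0∞ :=
  (Measure.pi fun _ : Fin n => ν) {x | t < ∑ i, x i}

lemma meas_sumset (n : ℕ) (t : ℝ) : MeasurableSet {x : Fin n → ℝ | t < ∑ i, x i} :=
  measurableSet_lt measurable_const (Finset.measurable_sum _ fun i _ => measurable_pi_apply i)

lemma E_le_one (n : ℕ) (t : ℝ) : E ν n t ≤ 1 := prob_le_one

lemma E_antitone (n : ℕ) : Antitone (E ν n) := fun s t hst =>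
  measure_mono (fun x hx => lt_of_le_of_lt hst hx)

lemma E_one (t : ℝ) : E ν 1 t = ν (Ioi t) := by
  have h := measurePreserving_funUnique ν (Fin 1)
  have hset : {x : Fin 1 → ℝ | t < ∑ i, x i}
      = (MeasurableEquiv.funUnique (Fin 1) ℝ) ⁻¹' (Ioi t) := by
    ext x
    simp [Fin.sum_univ_one, MeasurableEquiv.funUnique]
  rw [E, hset]; exact h.measure_preimage measurableSet_Ioi.nullMeasurableSet

lemma E_succ (n : ℕ) (t : ℝ) :
    E ν (n + 1) t = ∫⁻ y, E ν n (t - y) ∂ν := by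
  have h := measurePreserving_piFinSuccAbove (fun _ : Fin (n + 1) => ν) 0
  have hmeas : MeasurableSet {p : ℝ × (Fin n → ℝ) | t < p.1 + ∑ j, p.2 j} :=
    measurableSet_lt measurable_const
      (measurable_fst.add (Finset.measurable_sum _ fun j _ => (measurable_pi_apply j).comp measurable_snd))
  have hset : {x : Fin (n + 1) → ℝ | t < ∑ i, x i}
      = (MeasurableEquiv.piFinSuccAbove (fun _ : Fin (n+1) => ℝ) 0) ⁻¹' {p : ℝ × (Fin n → ℝ) | t < p.1 + ∑ j, p.2 j} := by
    ext x
    simp only [Set.mem_setOf_eq, Set.mem_preimage, MeasurableEquiv.piFinSuccAbove_apply]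
    rw [Fin.sum_univ_succAbove x 0]
    rfl
  rw [E, hset, h.measure_preimage hmeas.nullMeasurableSet,
    Measure.prod_apply hmeas]
  congr 1
  ext y
  have : (Prod.mk y ⁻¹' {p : ℝ × (Fin n → ℝ) | t < p.1 + ∑ j, p.2 j})
      = {z : Fin n → ℝ | t - y < ∑ j, z j} := by
    ext z; simp [sub_lt_iff_lt_add']
  rw [this]; rfl

lemma tail_conv (μ ρ : Measure ℝ) [SFinite μ] [SFinite ρ] (t : ℝ) :
    (μ.conv ρ) (Ioi t) = ∫⁻ y, ρ (Ioi (t - y)) ∂μ := by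
  have hmeas : MeasurableSet {p : ℝ × ℝ | t < p.1 + p.2} :=
    measurableSet_lt measurable_const (measurable_fst.add measurable_snd)
  rw [Measure.conv, Measure.map_apply measurable_add measurableSet_Ioi]
  have : (fun p : ℝ × ℝ => p.1 + p.2) ⁻¹' (Ioi t) = {p : ℝ × ℝ | t < p.1 + p.2} := rfl
  rw [this, Measure.prod_apply hmeas]
  congr 1
  ext y
  have : (Prod.mk y ⁻¹' {p : ℝ × ℝ | t < p.1 + p.2}) = Ioi (t - y) := by
    ext z; simp [sub_lt_iff_lt_add']
  rw [this]


lemma F1 (ν1 : Measure ℝ) [IsProbabilityMeasure ν1] (hnn : ν1 (Set.Iio 0) = 0) :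
    ∀ s : ℝ, s < 0 → ν1 (Ioi s) = 1 := by
  intro s hs
  have h0 : ν1 (Ici 0) = 1 := by
    have := prob_compl_eq_one_sub (μ := ν1) measurableSet_Iio (s := Iio (0:ℝ))
    rw [compl_Iio] at this
    rw [this, hnn]; simp
  refine le_antisymm prob_le_one ?_
  rw [← h0]
  exact measure_mono (fun x hx => lt_of_lt_of_le hs hx)

lemma F2 (b1 : ℝ) (νE : Measure ℝ) [IsProbabilityMeasure νE]
    (hE : ∀ t : ℝ, 0 ≤ t → νE (Set.Ioi t) = ENNReal.ofReal (Real.exp (-(2 * b1) * t))) :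
    νE (Iio 0) = 0 := by
  have h0 : νE (Ioi 0) = 1 := by
    rw [hE 0 le_rfl]; simp
  have h : νE (Iic 0) = 0 := by
    have := prob_compl_eq_one_sub (μ := νE) measurableSet_Ioi (s := Ioi (0:ℝ))
    rw [compl_Ioi] at this
    rw [this, h0]; simp
  exact le_antisymm (le_trans (measure_mono Iio_subset_Iic_self) h.le) zero_le

lemma h1tail (νE ν1 ν2 : Measure ℝ)
    (h1 : ν1 = (2 : ENNReal)⁻¹ • νE + (2 : ENNReal)⁻¹ • (Measure.conv νE ν2)) :
    ∀ t : ℝ, ν1 (Ioi t)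
    = 2⁻¹ * νE (Ioi t) + 2⁻¹ * (Measure.conv νE ν2) (Ioi t) := by
  intro t
  conv_lhs => rw [h1]
  simp [Measure.add_apply, Measure.smul_apply, smul_eq_mul]

lemma F4 (b1 : ℝ) (νE ν1 ν2 σ : Measure ℝ)
    [IsProbabilityMeasure νE] [IsProbabilityMeasure ν1]
    [IsProbabilityMeasure ν2] [IsProbabilityMeasure σ]
    (hE : ∀ t : ℝ, 0 ≤ t → νE (Set.Ioi t) = ENNReal.ofReal (Real.exp (-(2 * b1) * t)))
    (h1 : ν1 = (2 : ENNReal)⁻¹ • νE + (2 : ENNReal)⁻¹ • (Measure.conv νE ν2))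
    (h2 : ν2 = Measure.conv σ ν1)
    (hdom : ∀ t : ℝ, ν1 (Set.Ioi t) ≤ σ (Set.Ioi t)) :
    ∀ t : ℝ, E ν1 2 t ≤ 2 * ν1 (Ioi t) := by
  intro t
  have e2 : E ν1 2 t = ∫⁻ y, ν1 (Ioi (t - y)) ∂ν1 := by
    rw [E_succ ν1 1 t]
    congr 1; ext y; exact E_one ν1 (t - y)
  have step1 : E ν1 2 t ≤ ν2 (Ioi t) := by
    rw [e2, h2, Measure.conv_comm, tail_conv ν1 σ t]
    exact lintegral_mono fun y => hdom (t - y)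
  have aeE : ∀ᵐ y ∂νE, (0:ℝ) ≤ y := by
    rw [ae_iff]
    have h : {y : ℝ | ¬ (0:ℝ) ≤ y} = Iio 0 := by ext y; simp
    rw [h]; exact F2 b1 νE hE
  have step2 : ν2 (Ioi t) ≤ (Measure.conv νE ν2) (Ioi t) := by
    rw [tail_conv νE ν2 t]
    calc ν2 (Ioi t) = ∫⁻ _, ν2 (Ioi t) ∂νE := by
          rw [lintegral_const, measure_univ, mul_one]
      _ ≤ ∫⁻ y, ν2 (Ioi (t - y)) ∂νE := by
          refine lintegral_mono_ae (aeE.mono fun y hy => ?_)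
          exact measure_mono (Ioi_subset_Ioi (by linarith))
  have step3 : (Measure.conv νE ν2) (Ioi t) ≤ 2 * ν1 (Ioi t) := by
    have h := h1tail νE ν1 ν2 h1 t
    have hle : 2⁻¹ * (Measure.conv νE ν2) (Ioi t) ≤ ν1 (Ioi t) := by
      rw [h]; exact le_add_self
    calc (Measure.conv νE ν2) (Ioi t)
        = 2 * (2⁻¹ * (Measure.conv νE ν2) (Ioi t)) := by
          rw [← mul_assoc, ENNReal.mul_inv_cancel two_ne_zero ENNReal.ofNat_ne_top, one_mul]
      _ ≤ 2 * ν1 (Ioi t) := mul_le_mul_right hle 2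
  exact le_trans step1 (le_trans step2 step3)

lemma F5 (b1 : ℝ) (νE ν1 ν2 : Measure ℝ)
    [IsProbabilityMeasure ν1]
    (hE : ∀ t : ℝ, 0 ≤ t → νE (Set.Ioi t) = ENNReal.ofReal (Real.exp (-(2 * b1) * t)))
    (hnn : ν1 (Set.Iio 0) = 0)
    (h1 : ν1 = (2 : ENNReal)⁻¹ • νE + (2 : ENNReal)⁻¹ • (Measure.conv νE ν2)) :
    ∀ t : ℝ, 0 < ν1 (Ioi t) := by
  intro t
  rcases lt_or_ge t 0 with ht | ht
  · rw [F1 ν1 hnn t ht]; norm_num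
  · have h := h1tail νE ν1 ν2 h1 t
    have hpos : 0 < νE (Ioi t) := by
      rw [hE t ht]
      simp [ENNReal.ofReal_pos, Real.exp_pos]
    calc (0:ℝ≥0∞) < 2⁻¹ * νE (Ioi t) := ENNReal.mul_pos (by norm_num) hpos.ne'
      _ ≤ ν1 (Ioi t) := by rw [h]; exact le_self_add


section Real
variable (ν1 : Measure ℝ) [IsProbabilityMeasure ν1]

-- real tail facts
lemma TTpos (hpos : ∀ t : ℝ, 0 < ν1 (Ioi t)) (t : ℝ) : 0 < (ν1 (Ioi t)).toReal :=
  ENNReal.toReal_pos (hpos t).ne' (measure_ne_top _ _)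

lemma TTanti : Antitone (fun t => (ν1 (Ioi t)).toReal) := fun s t h =>
  (ENNReal.toReal_le_toReal (measure_ne_top _ _) (measure_ne_top _ _)).2
    (measure_mono (Ioi_subset_Ioi h))

lemma TT_le_one (t : ℝ) : (ν1 (Ioi t)).toReal ≤ 1 := by
  have := prob_le_one (μ := ν1) (s := Ioi t)
  simpa using (ENNReal.toReal_le_toReal (measure_ne_top _ _) ENNReal.one_ne_top).2 this

lemma Iic_toReal (t : ℝ) : (ν1 (Iic t)).toReal = 1 - (ν1 (Ioi t)).toReal := by
  have h : ν1 (Iic t) + ν1 (Ioi t) = 1 := by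
    have := measure_add_measure_compl (μ := ν1) (measurableSet_Iic (a := t))
    rwa [compl_Iic, measure_univ] at this
  have h2 : (ν1 (Iic t)).toReal + (ν1 (Ioi t)).toReal = 1 := by
    rw [← ENNReal.toReal_add (measure_ne_top _ _) (measure_ne_top _ _), h, ENNReal.toReal_one]
  linarith

-- F6
lemma F6 : Tendsto (fun t => (ν1 (Ioi t)).toReal) atTop (𝓝 0) := by
  have h1 : Tendsto (fun t : ℝ => ν1 (Iic t)) atTop (𝓝 1) := by
    have := tendsto_measure_Iic_atTop (μ := ν1)
    rwa [measure_univ] at this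
  have h2 : Tendsto (fun t : ℝ => (ν1 (Iic t)).toReal) atTop (𝓝 1) := by
    have := (ENNReal.tendsto_toReal ENNReal.one_ne_top).comp h1
    simpa [Function.comp_def] using this
  have h3 : Tendsto (fun t : ℝ => 1 - (ν1 (Iic t)).toReal) atTop (𝓝 (1 - 1)) :=
    tendsto_const_nhds.sub h2
  simp only [sub_self] at h3
  refine h3.congr fun t => ?_
  rw [Iic_toReal]; ring

-- F7 : long-tailedness
lemma F7 (hnn : ν1 (Set.Iio 0) = 0)
    (hpos : ∀ t : ℝ, 0 < ν1 (Ioi t))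
    (hkey : ∀ t : ℝ, E ν1 2 t ≤ 2 * ν1 (Ioi t))
    (A : ℝ) (hA : 0 ≤ A) :
    Tendsto (fun t => (ν1 (Ioi (t - A))).toReal / (ν1 (Ioi t)).toReal) atTop (𝓝 1) := by
  set TT := fun t => (ν1 (Ioi t)).toReal with hTT
  have hp : 0 < TT A := TTpos ν1 hpos A
  -- the key real inequality
  have hineq : ∀ t : ℝ, A ≤ t → TT (t - A) * (TT A - TT t) ≤ TT t * TT A := by
    intro t ht
    -- ennreal lower bound for E ν1 2 t
    have e2 : E ν1 2 t = ∫⁻ y, ν1 (Ioi (t - y)) ∂ν1 := by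
      rw [E_succ ν1 1 t]; congr 1; ext y; exact E_one ν1 (t - y)
    have hIic : ν1 (Iic A) = ν1 (Icc 0 A) := by
      refine le_antisymm ?_ (measure_mono Icc_subset_Iic_self)
      calc ν1 (Iic A) ≤ ν1 (Iio 0 ∪ Icc 0 A) := by
            refine measure_mono fun y hy => ?_
            rcases lt_or_ge y 0 with h | h
            · exact Or.inl h
            · exact Or.inr ⟨h, hy⟩
        _ ≤ ν1 (Iio 0) + ν1 (Icc 0 A) := measure_union_le _ _
        _ = ν1 (Icc 0 A) := by rw [hnn, zero_add]
    have B1 : ν1 (Ioi t) * ν1 (Iic A) ≤ ∫⁻ y in Iic A, ν1 (Ioi (t - y)) ∂ν1 := by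
      calc ν1 (Ioi t) * ν1 (Iic A) = ν1 (Ioi t) * ν1 (Icc 0 A) := by rw [hIic]
        _ = ∫⁻ _ in Icc 0 A, ν1 (Ioi t) ∂ν1 := (setLIntegral_const _ _).symm
        _ ≤ ∫⁻ y in Icc 0 A, ν1 (Ioi (t - y)) ∂ν1 := by
            refine setLIntegral_mono' measurableSet_Icc fun y hy => ?_
            exact measure_mono (Ioi_subset_Ioi (by linarith [hy.1]))
        _ ≤ ∫⁻ y in Iic A, ν1 (Ioi (t - y)) ∂ν1 :=
            lintegral_mono_set (Icc_subset_Iic_self)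
    have B2 : ν1 (Ioi (t - A)) * ν1 (Ioc A t) ≤ ∫⁻ y in Ioc A t, ν1 (Ioi (t - y)) ∂ν1 := by
      calc ν1 (Ioi (t - A)) * ν1 (Ioc A t)
          = ∫⁻ _ in Ioc A t, ν1 (Ioi (t - A)) ∂ν1 := (setLIntegral_const _ _).symm
        _ ≤ ∫⁻ y in Ioc A t, ν1 (Ioi (t - y)) ∂ν1 := by
            refine setLIntegral_mono' measurableSet_Ioc fun y hy => ?_
            exact measure_mono (Ioi_subset_Ioi (by linarith [hy.1]))
    have B3 : ν1 (Ioi t) ≤ ∫⁻ y in Ioi t, ν1 (Ioi (t - y)) ∂ν1 := by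
      calc ν1 (Ioi t) = ∫⁻ _ in Ioi t, 1 ∂ν1 := (setLIntegral_one _).symm
        _ ≤ ∫⁻ y in Ioi t, ν1 (Ioi (t - y)) ∂ν1 := by
            refine setLIntegral_mono' measurableSet_Ioi fun y hy => ?_
            rw [F1 ν1 hnn (t - y) (by simp only [mem_Ioi] at hy; linarith)]
    have hsplit : (∫⁻ y in Iic A, ν1 (Ioi (t - y)) ∂ν1)
        + (∫⁻ y in Ioc A t, ν1 (Ioi (t - y)) ∂ν1)
        + (∫⁻ y in Ioi t, ν1 (Ioi (t - y)) ∂ν1) = ∫⁻ y, ν1 (Ioi (t - y)) ∂ν1 := by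
      rw [← lintegral_union measurableSet_Ioc (Iic_disjoint_Ioc le_rfl),
        Iic_union_Ioc_eq_Iic ht, ← compl_Iic,
        lintegral_add_compl _ measurableSet_Iic]
    have hENN : ν1 (Ioi t) * ν1 (Iic A) + ν1 (Ioi (t - A)) * ν1 (Ioc A t) + ν1 (Ioi t)
        ≤ 2 * ν1 (Ioi t) := by
      calc ν1 (Ioi t) * ν1 (Iic A) + ν1 (Ioi (t - A)) * ν1 (Ioc A t) + ν1 (Ioi t)
          ≤ (∫⁻ y in Iic A, ν1 (Ioi (t - y)) ∂ν1)
            + (∫⁻ y in Ioc A t, ν1 (Ioi (t - y)) ∂ν1)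
            + (∫⁻ y in Ioi t, ν1 (Ioi (t - y)) ∂ν1) :=
            add_le_add (add_le_add B1 B2) B3
        _ = ∫⁻ y, ν1 (Ioi (t - y)) ∂ν1 := hsplit
        _ = E ν1 2 t := e2.symm
        _ ≤ 2 * ν1 (Ioi t) := hkey t
    -- convert to reals
    have hfin : ∀ s : Set ℝ, ν1 s ≠ ⊤ := fun s => measure_ne_top _ _
    have hmul1 : ν1 (Ioi t) * ν1 (Iic A) ≠ ⊤ := ENNReal.mul_ne_top (hfin _) (hfin _)
    have hmul2 : ν1 (Ioi (t - A)) * ν1 (Ioc A t) ≠ ⊤ := ENNReal.mul_ne_top (hfin _) (hfin _)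
    have hreal : TT t * (ν1 (Iic A)).toReal + TT (t - A) * (ν1 (Ioc A t)).toReal + TT t
        ≤ 2 * TT t := by
      have hr := ENNReal.toReal_mono (ENNReal.mul_ne_top (by norm_num) (hfin _)) hENN
      rw [ENNReal.toReal_add (ENNReal.add_ne_top.2 ⟨hmul1, hmul2⟩) (hfin _),
        ENNReal.toReal_add hmul1 hmul2, ENNReal.toReal_mul, ENNReal.toReal_mul,
        ENNReal.toReal_mul] at hr
      simpa using hr
    have hIocA : (ν1 (Ioc A t)).toReal = TT A - TT t := by
      have h : ν1 (Ioc A t) + ν1 (Ioi t) = ν1 (Ioi A) := by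
        rw [← measure_union (Ioc_disjoint_Ioi le_rfl) measurableSet_Ioi,
          Ioc_union_Ioi_eq_Ioi ht]
      have h2 : (ν1 (Ioc A t)).toReal + TT t = TT A := by
        rw [hTT]
        rw [← ENNReal.toReal_add (hfin _) (hfin _), h]
      linarith
    have hIicA : (ν1 (Iic A)).toReal = 1 - TT A := Iic_toReal ν1 A
    rw [hIocA, hIicA] at hreal
    nlinarith [hreal]
  -- squeeze
  have hlow : ∀ t : ℝ, 1 ≤ TT (t - A) / TT t := fun t =>
    (one_le_div (TTpos ν1 hpos t)).2 (TTanti ν1 (by linarith))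
  have hupTend : Tendsto (fun t => TT A / (TT A - TT t)) atTop (𝓝 1) := by
    have : Tendsto (fun t => TT A - TT t) atTop (𝓝 (TT A - 0)) :=
      tendsto_const_nhds.sub (F6 ν1)
    rw [sub_zero] at this
    have h2 := (tendsto_const_nhds (x := TT A)).div this hp.ne'
    rw [div_self hp.ne'] at h2
    exact h2
  have hev : ∀ᶠ t in atTop, TT (t - A) / TT t ≤ TT A / (TT A - TT t) := by
    have h1 : ∀ᶠ t in atTop, TT t < TT A := (F6 ν1).eventually_lt_const hp
    filter_upwards [h1, eventually_ge_atTop A] with t hlt hge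
    have hd : 0 < TT A - TT t := by linarith
    rw [div_le_div_iff₀ (TTpos ν1 hpos t) hd]
    calc TT (t - A) * (TT A - TT t) ≤ TT t * TT A := hineq t hge
      _ = TT A * TT t := mul_comm _ _
  exact tendsto_of_tendsto_of_tendsto_of_le_of_le' tendsto_const_nhds hupTend
    (Eventually.of_forall hlow) hev

end Real

section Main
variable (ν1 : Measure ℝ) [IsProbabilityMeasure ν1]

lemma E_ne_top (n : ℕ) (t : ℝ) : E ν1 n t ≠ ⊤ := measure_ne_top _ _

-- F8 : geometric pointwise bound
lemma F8 (hkey : ∀ t : ℝ, E ν1 2 t ≤ 2 * ν1 (Ioi t)) :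
    ∀ (n : ℕ) (t : ℝ), E ν1 (n + 1) t ≤ 2 ^ n * ν1 (Ioi t) := by
  intro n
  induction n with
  | zero => intro t; rw [E_one ν1 t]; simp
  | succ n ih =>
    intro t
    have e2 : ∫⁻ y, ν1 (Ioi (t - y)) ∂ν1 = E ν1 2 t := by
      rw [E_succ ν1 1 t]; congr 1; ext y; exact (E_one ν1 (t - y)).symm
    calc E ν1 (n + 2) t = ∫⁻ y, E ν1 (n + 1) (t - y) ∂ν1 := E_succ ν1 (n + 1) t
      _ ≤ ∫⁻ y, 2 ^ n * ν1 (Ioi (t - y)) ∂ν1 := lintegral_mono fun y => ih (t - y)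
      _ = 2 ^ n * ∫⁻ y, ν1 (Ioi (t - y)) ∂ν1 :=
          lintegral_const_mul' _ _ (by exact ENNReal.pow_ne_top ENNReal.ofNat_ne_top)
      _ = 2 ^ n * E ν1 2 t := by rw [e2]
      _ ≤ 2 ^ n * (2 * ν1 (Ioi t)) := mul_le_mul_right (hkey t) _
      _ = 2 ^ (n + 1) * ν1 (Ioi t) := by ring

-- F9 : union lower bound
lemma F9 (hnn : ν1 (Set.Iio 0) = 0) (n : ℕ) (t : ℝ) :
    1 ≤ E ν1 n t + (ν1 (Iic t)) ^ n := by
  have hzero : ∀ i : Fin n, (Measure.pi fun _ : Fin n => ν1) {x | x i < 0} = 0 := by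
    intro i
    have hsub : {x : Fin n → ℝ | x i < 0} ⊆ Set.pi univ (fun j => if j = i then Iio 0 else univ) := by
      intro x hx j _
      by_cases hj : j = i
      · simp only [hj, if_pos rfl]; exact hx
      · simp [hj]
    refine le_antisymm ?_ zero_le
    calc (Measure.pi fun _ : Fin n => ν1) {x | x i < 0}
        ≤ (Measure.pi fun _ : Fin n => ν1) (Set.pi univ (fun j => if j = i then Iio 0 else univ)) :=
          measure_mono hsub
      _ = ∏ j : Fin n, ν1 (if j = i then Iio 0 else univ) := by
          rw [Measure.pi_pi]
      _ = 0 := Finset.prod_eq_zero (Finset.mem_univ i) (by rw [if_pos rfl, hnn])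
  have hbig : {x : Fin n → ℝ | ¬ t < ∑ i, x i}
      ⊆ (Set.pi univ fun _ => Iic t) ∪ ⋃ i, {x | x i < 0} := by
    intro x hx
    simp only [Set.mem_setOf_eq, not_lt] at hx
    by_cases hneg : ∃ i, x i < 0
    · exact Or.inr (Set.mem_iUnion.2 (by obtain ⟨i, hi⟩ := hneg; exact ⟨i, hi⟩))
    · push_neg at hneg
      refine Or.inl fun i _ => ?_
      calc x i ≤ ∑ j, x j := Finset.single_le_sum (fun j _ => hneg j) (Finset.mem_univ i)
        _ ≤ t := hx
  have hcompl : (Measure.pi fun _ : Fin n => ν1) {x | ¬ t < ∑ i, x i} ≤ (ν1 (Iic t)) ^ n := by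
    calc (Measure.pi fun _ : Fin n => ν1) {x | ¬ t < ∑ i, x i}
        ≤ (Measure.pi fun _ : Fin n => ν1) ((Set.pi univ fun _ => Iic t) ∪ ⋃ i, {x | x i < 0}) :=
          measure_mono hbig
      _ ≤ (Measure.pi fun _ : Fin n => ν1) (Set.pi univ fun _ => Iic t)
          + (Measure.pi fun _ : Fin n => ν1) (⋃ i, {x | x i < 0}) := measure_union_le _ _
      _ ≤ (ν1 (Iic t)) ^ n + ∑' i : Fin n, (Measure.pi fun _ : Fin n => ν1) {x | x i < 0} := by
          refine add_le_add ?_ (measure_iUnion_le _)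
          rw [Measure.pi_pi]
          simp [Finset.prod_const]
      _ = (ν1 (Iic t)) ^ n := by
          simp only [hzero, tsum_zero, add_zero]
  calc (1:ℝ≥0∞) = (Measure.pi fun _ : Fin n => ν1) univ := measure_univ.symm
    _ ≤ (Measure.pi fun _ : Fin n => ν1) ({x | t < ∑ i, x i} ∪ {x | ¬ t < ∑ i, x i}) := by
        refine measure_mono fun x _ => ?_
        by_cases h : t < ∑ i, x i
        · exact Or.inl h
        · exact Or.inr h
    _ ≤ E ν1 n t + (Measure.pi fun _ : Fin n => ν1) {x | ¬ t < ∑ i, x i} := measure_union_le _ _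
    _ ≤ E ν1 n t + (ν1 (Iic t)) ^ n := add_le_add_right hcompl _

-- F10 : real geometric-sum lower bound
lemma F10 (hnn : ν1 (Set.Iio 0) = 0) (n : ℕ) (t : ℝ) :
    (ν1 (Ioi t)).toReal * (∑ k ∈ Finset.range n, (1 - (ν1 (Ioi t)).toReal) ^ k)
      ≤ (E ν1 n t).toReal := by
  have hfin : ∀ s : Set ℝ, ν1 s ≠ ⊤ := fun s => measure_ne_top _ _
  have h9 := F9 ν1 hnn n t
  have hIic : (ν1 (Iic t)).toReal = 1 - (ν1 (Ioi t)).toReal := by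
    have h : ν1 (Iic t) + ν1 (Ioi t) = 1 := by
      have := measure_add_measure_compl (μ := ν1) (measurableSet_Iic (a := t))
      rwa [compl_Iic, measure_univ] at this
    have h2 : (ν1 (Iic t)).toReal + (ν1 (Ioi t)).toReal = 1 := by
      rw [← ENNReal.toReal_add (hfin _) (hfin _), h, ENNReal.toReal_one]
    linarith
  have hr : 1 ≤ (E ν1 n t).toReal + (1 - (ν1 (Ioi t)).toReal) ^ n := by
    have hrr := ENNReal.toReal_mono
      (ENNReal.add_ne_top.2 ⟨E_ne_top ν1 n t, ENNReal.pow_ne_top (hfin _)⟩) h9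
    rw [ENNReal.toReal_add (E_ne_top ν1 n t) (ENNReal.pow_ne_top (hfin _)),
      ENNReal.toReal_pow, hIic, ENNReal.toReal_one] at hrr
    exact hrr
  have hgeom : (ν1 (Ioi t)).toReal * (∑ k ∈ Finset.range n, (1 - (ν1 (Ioi t)).toReal) ^ k)
      = 1 - (1 - (ν1 (Ioi t)).toReal) ^ n := by
    have := geom_sum_mul (1 - (ν1 (Ioi t)).toReal) n
    nlinarith [this]
  rw [hgeom]; linarith

end Main

lemma main (ν1 : Measure ℝ) [IsProbabilityMeasure ν1]
    (hnn : ν1 (Set.Iio 0) = 0)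
    (hpos : ∀ t : ℝ, 0 < ν1 (Ioi t))
    (hkey : ∀ t : ℝ, E ν1 2 t ≤ 2 * ν1 (Ioi t)) :
    ∀ n : ℕ, 1 ≤ n →
      Tendsto (fun t => (E ν1 n t).toReal / (ν1 (Ioi t)).toReal) atTop (𝓝 (n : ℝ)) := by
  intro n hn
  induction n, hn using Nat.le_induction with
  | base =>
    have h : ∀ t : ℝ, (E ν1 1 t).toReal / (ν1 (Ioi t)).toReal = 1 := fun t => by
      rw [E_one ν1 t]; exact div_self (TTpos ν1 hpos t).ne'
    rw [show ((1:ℕ):ℝ) = 1 by norm_cast]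
    exact Tendsto.congr (fun t => (h t).symm) tendsto_const_nhds
  | succ n hn IH =>
    set TT := fun t : ℝ => (ν1 (Ioi t)).toReal with hTTdef
    set R := fun t : ℝ => (E ν1 (n + 1) t).toReal / TT t with hRdef
    have hub : ∀ t, R t ≤ 2 ^ n := by
      intro t
      have h8 := F8 ν1 hkey n t
      have hreal : (E ν1 (n + 1) t).toReal ≤ 2 ^ n * TT t := by
        have := ENNReal.toReal_mono
          (ENNReal.mul_ne_top (ENNReal.pow_ne_top ENNReal.ofNat_ne_top) (measure_ne_top _ _)) h8
        rwa [ENNReal.toReal_mul, ENNReal.toReal_pow, ENNReal.toReal_ofNat] at this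
      rw [hRdef, div_le_iff₀ (TTpos ν1 hpos t)]
      exact hreal
    have hb_above : IsBoundedUnder (· ≤ ·) atTop R := isBoundedUnder_of ⟨2 ^ n, hub⟩
    have hb_below : IsBoundedUnder (· ≥ ·) atTop R :=
      isBoundedUnder_of ⟨0, fun t => div_nonneg ENNReal.toReal_nonneg ENNReal.toReal_nonneg⟩
    -- liminf lower bound
    have hliminf : ((n : ℝ) + 1) ≤ liminf R atTop := by
      set L := fun t : ℝ => ∑ k ∈ Finset.range (n + 1), (1 - TT t) ^ k with hLdef
      have hL : Tendsto L atTop (𝓝 ((n : ℝ) + 1)) := by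
        have h1 : Tendsto (fun t => 1 - TT t) atTop (𝓝 1) := by
          have := tendsto_const_nhds (x := (1:ℝ)) (f := atTop (α := ℝ)) |>.sub (F6 ν1)
          simpa using this
        have h2 := tendsto_finset_sum (Finset.range (n + 1))
          (fun k _ => (h1.pow k : Tendsto (fun t => (1 - TT t) ^ k) atTop (𝓝 (1 ^ k))))
        simp only [one_pow, Finset.sum_const, Finset.card_range, nsmul_eq_mul, mul_one] at h2
        convert h2 using 2
        push_cast; ring
      have hLle : ∀ t, L t ≤ R t := by
        intro t
        rw [hRdef, le_div_iff₀ (TTpos ν1 hpos t)]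
        calc L t * TT t = TT t * L t := mul_comm _ _
          _ ≤ (E ν1 (n + 1) t).toReal := F10 ν1 hnn (n + 1) t
      calc ((n : ℝ) + 1) = liminf L atTop := hL.liminf_eq.symm
        _ ≤ liminf R atTop := liminf_le_liminf (Eventually.of_forall hLle)
            hL.isBoundedUnder_ge hb_above.isCoboundedUnder_ge
    -- limsup upper bound
    have hlimsup : limsup R atTop ≤ (n : ℝ) + 1 := by
      by_contra hc
      push_neg at hc
      set ε := (limsup R atTop - ((n : ℝ) + 1)) / 2 with hεdef
      have hεpos : 0 < ε := by rw [hεdef]; linarith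
      have hev := IH.eventually_lt_const (show (n : ℝ) < n + ε by linarith)
      rw [eventually_atTop] at hev
      obtain ⟨A₀, hA₀⟩ := hev
      set A := max A₀ 0 with hAdef
      have hA : 0 ≤ A := le_max_right _ _
      have hEb : ∀ s, A ≤ s → E ν1 n s ≤ ENNReal.ofReal ((n : ℝ) + ε) * ν1 (Ioi s) := by
        intro s hs
        have h := hA₀ s (le_trans (le_max_left _ _) hs)
        have h2 : (E ν1 n s).toReal ≤ ((n : ℝ) + ε) * (ν1 (Ioi s)).toReal := by
          rw [div_lt_iff₀ (TTpos ν1 hpos s)] at h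
          exact h.le
        calc E ν1 n s = ENNReal.ofReal ((E ν1 n s).toReal) :=
              (ENNReal.ofReal_toReal (E_ne_top ν1 n s)).symm
          _ ≤ ENNReal.ofReal (((n : ℝ) + ε) * (ν1 (Ioi s)).toReal) := ENNReal.ofReal_le_ofReal h2
          _ = ENNReal.ofReal ((n : ℝ) + ε) * ENNReal.ofReal ((ν1 (Ioi s)).toReal) :=
              ENNReal.ofReal_mul (by positivity)
          _ = ENNReal.ofReal ((n : ℝ) + ε) * ν1 (Ioi s) := by
              rw [ENNReal.ofReal_toReal (measure_ne_top _ _)]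
      have hkey2 : ∀ t, E ν1 (n + 1) t
          ≤ ENNReal.ofReal ((n : ℝ) + ε) * ν1 (Ioi t) + ν1 (Ioi (t - A)) := by
        intro t
        have hIicT : ∫⁻ y in Iic t, ν1 (Ioi (t - y)) ∂ν1 ≤ ν1 (Ioi t) := by
          have e2 : E ν1 2 t = ∫⁻ y, ν1 (Ioi (t - y)) ∂ν1 := by
            rw [E_succ ν1 1 t]; congr 1; ext y; exact E_one ν1 (t - y)
          have hIoiT : ∫⁻ y in Ioi t, ν1 (Ioi (t - y)) ∂ν1 = ν1 (Ioi t) := by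
            rw [setLIntegral_congr_fun measurableSet_Ioi (fun y hy =>
              F1 ν1 hnn (t - y) (by simp only [mem_Ioi] at hy; linarith)), setLIntegral_one]
          have htot : (∫⁻ y in Iic t, ν1 (Ioi (t - y)) ∂ν1) + ν1 (Ioi t) = E ν1 2 t := by
            have hac := lintegral_add_compl (μ := ν1) (fun y => ν1 (Ioi (t - y)))
              (measurableSet_Iic (a := t))
            rw [compl_Iic, hIoiT] at hac
            rw [e2]; exact hac
          have h2 := hkey t
          rw [← htot, two_mul] at h2
          exact (ENNReal.add_le_add_iff_right (measure_ne_top _ _)).1 h2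
        have hpart2 : ∫⁻ y in Ioi (t - A), E ν1 n (t - y) ∂ν1 ≤ ν1 (Ioi (t - A)) := by
          calc ∫⁻ y in Ioi (t - A), E ν1 n (t - y) ∂ν1
              ≤ ∫⁻ _ in Ioi (t - A), 1 ∂ν1 :=
                setLIntegral_mono' measurableSet_Ioi fun y _ => E_le_one ν1 n (t - y)
            _ = ν1 (Ioi (t - A)) := setLIntegral_one _
        have hpart1 : ∫⁻ y in Iic (t - A), E ν1 n (t - y) ∂ν1
            ≤ ENNReal.ofReal ((n : ℝ) + ε) * ν1 (Ioi t) := by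
          calc ∫⁻ y in Iic (t - A), E ν1 n (t - y) ∂ν1
              ≤ ∫⁻ y in Iic (t - A), ENNReal.ofReal ((n : ℝ) + ε) * ν1 (Ioi (t - y)) ∂ν1 :=
                setLIntegral_mono' measurableSet_Iic fun y hy =>
                  hEb (t - y) (by simp only [mem_Iic] at hy; linarith)
            _ = ENNReal.ofReal ((n : ℝ) + ε) * ∫⁻ y in Iic (t - A), ν1 (Ioi (t - y)) ∂ν1 :=
                lintegral_const_mul' _ _ ENNReal.ofReal_ne_top
            _ ≤ ENNReal.ofReal ((n : ℝ) + ε) * ∫⁻ y in Iic t, ν1 (Ioi (t - y)) ∂ν1 :=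
                mul_le_mul_right (lintegral_mono_set (Iic_subset_Iic.2 (by linarith))) _
            _ ≤ ENNReal.ofReal ((n : ℝ) + ε) * ν1 (Ioi t) := mul_le_mul_right hIicT _
        calc E ν1 (n + 1) t = ∫⁻ y, E ν1 n (t - y) ∂ν1 := E_succ ν1 n t
          _ = (∫⁻ y in Iic (t - A), E ν1 n (t - y) ∂ν1)
              + ∫⁻ y in Ioi (t - A), E ν1 n (t - y) ∂ν1 := by
              have hac := lintegral_add_compl (μ := ν1) (fun y => E ν1 n (t - y))
                (measurableSet_Iic (a := t - A))
              rw [compl_Iic] at hac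
              exact hac.symm
          _ ≤ ENNReal.ofReal ((n : ℝ) + ε) * ν1 (Ioi t) + ν1 (Ioi (t - A)) :=
              add_le_add hpart1 hpart2
      have hRle : ∀ t, R t ≤ ((n : ℝ) + ε) + TT (t - A) / TT t := by
        intro t
        have h := hkey2 t
        have hmulne : ENNReal.ofReal ((n : ℝ) + ε) * ν1 (Ioi t) ≠ ⊤ :=
          ENNReal.mul_ne_top ENNReal.ofReal_ne_top (measure_ne_top _ _)
        have hreal : (E ν1 (n + 1) t).toReal ≤ ((n : ℝ) + ε) * TT t + TT (t - A) := by
          have := ENNReal.toReal_mono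
            (ENNReal.add_ne_top.2 ⟨hmulne, measure_ne_top _ _⟩) h
          rwa [ENNReal.toReal_add hmulne (measure_ne_top _ _), ENNReal.toReal_mul,
            ENNReal.toReal_ofReal (by positivity)] at this
        have ht := TTpos ν1 hpos t
        rw [hRdef]
        calc (E ν1 (n + 1) t).toReal / TT t
            ≤ (((n : ℝ) + ε) * TT t + TT (t - A)) / TT t := by
              gcongr
          _ = ((n : ℝ) + ε) + TT (t - A) / TT t := by
              rw [add_div, mul_div_assoc, div_self ht.ne', mul_one]
      have hu : Tendsto (fun t => ((n : ℝ) + ε) + TT (t - A) / TT t) atTop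
          (𝓝 (((n : ℝ) + ε) + 1)) :=
        tendsto_const_nhds.add (F7 ν1 hnn hpos hkey A hA)
      have hls : limsup R atTop ≤ ((n : ℝ) + ε) + 1 := by
        calc limsup R atTop ≤ limsup (fun t => ((n : ℝ) + ε) + TT (t - A) / TT t) atTop :=
            limsup_le_limsup (Eventually.of_forall hRle)
              hb_below.isCoboundedUnder_le hu.isBoundedUnder_le
          _ = ((n : ℝ) + ε) + 1 := hu.limsup_eq
      rw [hεdef] at hls
      linarith
    have hfinal := tendsto_of_le_liminf_of_limsup_le hliminf hlimsup hb_above hb_below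
    convert hfinal using 2
    push_cast; ring


end BDaux

end Aux

/-- For a recurrent birth and death process on `ℤ⁺` with birth rates equal to death
rates and nonincreasing in the state, the hitting time `τ₀⁽¹⁾` of `0` from `1` is
subexponential.  Here `ν₁, ν₂` are the laws of `τ₀⁽¹⁾, τ₀⁽²⁾`, `νE` is the Exp(2b₁) law
of the holding time at `1`, and `σ` is the law of `τ₁⁽²⁾`; the hypotheses are the
first-jump decomposition `ν₁ = ½ νE + ½ (νE ∗ ν₂)`, the strong Markov identity
`ν₂ = σ ∗ ν₁`, and the stochastic domination of `τ₀⁽¹⁾` by `τ₁⁽²⁾` (which follows from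
the rates being nonincreasing). -/
theorem decreasing_rates_birth_death_subexponential
    (b1 : ℝ) (hb1 : 0 < b1)
    (νE ν1 ν2 σ : Measure ℝ)
    [IsProbabilityMeasure νE] [IsProbabilityMeasure ν1]
    [IsProbabilityMeasure ν2] [IsProbabilityMeasure σ]
    (hE : ∀ t : ℝ, 0 ≤ t → νE (Set.Ioi t) = ENNReal.ofReal (Real.exp (-(2 * b1) * t)))
    (hnn : ν1 (Set.Iio 0) = 0)
    (h1 : ν1 = (2 : ENNReal)⁻¹ • νE + (2 : ENNReal)⁻¹ • (Measure.conv νE ν2))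
    (h2 : ν2 = Measure.conv σ ν1)
    (hdom : ∀ t : ℝ, ν1 (Set.Ioi t) ≤ σ (Set.Ioi t)) :
    Filter.limsup (fun t => convTail ν1 2 t / (ν1 (Set.Ioi t)).toReal) atTop ≤ 2 ∧
    Subexponential ν1 := by
  have hpos := BDaux.F5 b1 νE ν1 ν2 hE hnn h1
  have hkey := BDaux.F4 b1 νE ν1 ν2 σ hE h1 h2 hdom
  have hmain := BDaux.main ν1 hnn hpos hkey
  have hsub : Subexponential ν1 := fun n hn => hmain n hn
  refine ⟨?_, hsub⟩
  have h2' := hsub 2 (by norm_num)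
  have hls := h2'.limsup_eq
  rw [hls]
  norm_num
end
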